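/- arXiv:0708.0061 — 6 statements merged into one kernel-verified Lean document; each statement's English description precedes it below -/
import Mathlib

section
/- Let p₀ and q be probability densities on a σ-finite measure space (Ω, μ), let P₀ be the probability measure with density p₀, and let X₁, …, Xₙ be i.i.d. with law P₀. Then for every b ≥ 0, P₀^n( ∏_{k=1}^n q(X_k) ≥ exp(−n b) · ∏_{k=1}^n p₀(X_k) ) ≤ exp( n b / 2 − n · d_H²(p₀, q) / 2 ). -/
open MeasureTheory Real
open scoped ENNReal NNReal

/-- A (probability) density on `(Ω, μ)`: a nonnegative measurable function integrating to 1. -/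
def IsDensity {Ω : Type*} [MeasurableSpace Ω] (μ : Measure Ω) (p : Ω → ℝ) : Prop :=
  Measurable p ∧ (∀ x, 0 ≤ p x) ∧ Integrable p μ ∧ ∫ x, p x ∂μ = 1

/-- Squared Hellinger distance `d_H²(p, q) = ∫ (√p − √q)² dμ`. -/
noncomputable def hellSq {Ω : Type*} [MeasurableSpace Ω] (μ : Measure Ω) (p q : Ω → ℝ) : ℝ :=
  ∫ x, (Real.sqrt (p x) - Real.sqrt (q x)) ^ 2 ∂μ

/-- `√` of a finite product of nonnegative reals is the product of the `√`s. -/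
lemma sqrt_finset_prod {ι : Type*} (s : Finset ι) (f : ι → ℝ) (hf : ∀ i ∈ s, 0 ≤ f i) :
    Real.sqrt (∏ i ∈ s, f i) = ∏ i ∈ s, Real.sqrt (f i) := by
  induction s using Finset.cons_induction with
  | empty => simp
  | cons a s ha ih =>
    rw [Finset.prod_cons, Finset.prod_cons, Real.sqrt_mul (hf a (Finset.mem_cons_self a s)),
      ih (fun i hi => hf i (Finset.mem_cons_of_mem hi))]

/-- Lintegral of a product of one-coordinate functions over a finite power measure. -/
lemma lintegral_pi_prod_pow {Ω : Type*} [MeasurableSpace Ω] (ν : Measure Ω) [SigmaFinite ν]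
    {f : Ω → ℝ≥0∞} (hf : Measurable f) (n : ℕ) :
    ∫⁻ x : Fin n → Ω, ∏ k : Fin n, f (x k) ∂(Measure.pi fun _ : Fin n => ν)
      = (∫⁻ x, f x ∂ν) ^ n := by
  induction n with
  | zero => simp
  | succ n ih =>
    rw [← ((measurePreserving_piFinSuccAbove (fun _ : Fin (n + 1) => ν) 0).symm).lintegral_comp_emb
      (MeasurableEquiv.measurableEmbedding _)]
    simp_rw [MeasurableEquiv.piFinSuccAbove_symm_apply, Fin.insertNthEquiv, Equiv.coe_fn_mk,
      Fin.insertNth_zero, Fin.prod_univ_succ, Fin.cons_zero, Fin.cons_succ, cast_eq]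
    rw [lintegral_prod_mul (f := f) (g := fun y : Fin n → Ω => ∏ k : Fin n, f (y k))
      hf.aemeasurable
      ((Finset.measurable_prod Finset.univ fun k _ =>
        hf.comp (measurable_pi_apply k)).aemeasurable), ih, pow_succ']

/-- Likelihood ratio tail bound: for every `b ≥ 0`,
`P₀^n( ∏ q(X_k) ≥ exp(−n b) ∏ p₀(X_k) ) ≤ exp( n b/2 − n d_H²(p₀,q)/2 )`. -/
theorem likelihood_ratio_tail_bound {Ω : Type*} [MeasurableSpace Ω]
    (μ : Measure Ω) [SigmaFinite μ] (p₀ q : Ω → ℝ)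
    (hp₀ : IsDensity μ p₀) (hq : IsDensity μ q)
    (P₀ : Measure Ω) [IsProbabilityMeasure P₀]
    (hP₀ : P₀ = μ.withDensity fun x => ENNReal.ofReal (p₀ x))
    (n : ℕ) (hn : 0 < n) (b : ℝ) (hb : 0 ≤ b) :
    (Measure.pi fun _ : Fin n => P₀)
        {x : Fin n → Ω |
          Real.exp (-(n : ℝ) * b) * ∏ k : Fin n, p₀ (x k) ≤ ∏ k : Fin n, q (x k)}
      ≤ ENNReal.ofReal (Real.exp ((n : ℝ) * b / 2 - (n : ℝ) * hellSq μ p₀ q / 2)) := by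
  obtain ⟨hpm, hpnn, hpint, hpone⟩ := hp₀
  obtain ⟨hqm, hqnn, hqint, hqone⟩ := hq
  -- s = √p₀ √q, ρ = ∫ s
  set s : Ω → ℝ := fun x => Real.sqrt (p₀ x) * Real.sqrt (q x) with hs_def
  have hsm : Measurable s := hpm.sqrt.mul hqm.sqrt
  have hsnn : ∀ x, 0 ≤ s x := fun x => mul_nonneg (Real.sqrt_nonneg _) (Real.sqrt_nonneg _)
  have hsint : Integrable s μ := by
    refine Integrable.mono' ((hpint.add hqint).div_const 2)
      hsm.aestronglyMeasurable (Filter.Eventually.of_forall fun x => ?_)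
    rw [Real.norm_of_nonneg (hsnn x)]
    have h2 : 2 * (Real.sqrt (p₀ x) * Real.sqrt (q x))
        ≤ Real.sqrt (p₀ x) ^ 2 + Real.sqrt (q x) ^ 2 := by
      nlinarith [sq_nonneg (Real.sqrt (p₀ x) - Real.sqrt (q x))]
    rw [Real.sq_sqrt (hpnn x), Real.sq_sqrt (hqnn x)] at h2
    simp only [Pi.add_apply, hs_def]
    linarith
  set ρ : ℝ := ∫ x, s x ∂μ with hρ_def
  have hρ_nonneg : 0 ≤ ρ := integral_nonneg hsnn
  -- hellSq = 2 - 2ρ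
  have hkey : hellSq μ p₀ q = 2 - 2 * ρ := by
    have hpt : ∀ x, (Real.sqrt (p₀ x) - Real.sqrt (q x)) ^ 2 = p₀ x + q x - 2 * s x := by
      intro x
      have h1 := Real.sq_sqrt (hpnn x)
      have h2 := Real.sq_sqrt (hqnn x)
      simp only [hs_def]
      nlinarith
    have hsum : Integrable (fun a => p₀ a + q a) μ := hpint.add hqint
    have h2s : Integrable (fun a => 2 * s a) μ := hsint.const_mul 2
    rw [hellSq, integral_congr_ae (Filter.Eventually.of_forall hpt),
      integral_sub hsum h2s, integral_add hpint hqint,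
      integral_const_mul, hpone, hqone, hρ_def]
    ring
  have hρ_le : ρ ≤ Real.exp (-(hellSq μ p₀ q) / 2) := by
    have h1 : ρ = (-(hellSq μ p₀ q) / 2) + 1 := by linarith
    rw [h1]
    exact Real.add_one_le_exp _
  -- g = ofReal (√q / √p₀)
  set g : Ω → ℝ≥0∞ := fun x => ENNReal.ofReal (Real.sqrt (q x) / Real.sqrt (p₀ x)) with hg_def
  have hgm : Measurable g := (hqm.sqrt.div hpm.sqrt).ennreal_ofReal
  have hgint : ∫⁻ x, g x ∂P₀ = ENNReal.ofReal ρ := by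
    rw [hP₀, lintegral_withDensity_eq_lintegral_mul _ hpm.ennreal_ofReal hgm]
    have heq : ∀ x, ((fun x => ENNReal.ofReal (p₀ x)) * g) x = ENNReal.ofReal (s x) := by
      intro x
      simp only [Pi.mul_apply, hg_def, hs_def]
      rw [← ENNReal.ofReal_mul (hpnn x)]
      congr 1
      rcases eq_or_lt_of_le (hpnn x) with h | h
      · rw [← h]; simp
      · have h1 : Real.sqrt (p₀ x) ≠ 0 := ne_of_gt (Real.sqrt_pos.mpr h)
        have h2 : p₀ x = Real.sqrt (p₀ x) * Real.sqrt (p₀ x) := (Real.mul_self_sqrt h.le).symm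
        field_simp
        linear_combination Real.sqrt (q x) * h2
    simp_rw [heq]
    rw [← ofReal_integral_eq_lintegral_ofReal hsint (Filter.Eventually.of_forall hsnn)]
  -- the event
  set A : Set (Fin n → Ω) := {x : Fin n → Ω |
      Real.exp (-(n : ℝ) * b) * ∏ k : Fin n, p₀ (x k) ≤ ∏ k : Fin n, q (x k)} with hA_def
  have hA : MeasurableSet A := by
    apply measurableSet_le
    · exact measurable_const.mul
        (Finset.measurable_prod Finset.univ fun k _ => hpm.comp (measurable_pi_apply k))
    · exact Finset.measurable_prod Finset.univ fun k _ => hqm.comp (measurable_pi_apply k)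
  -- a.e. positivity of p₀ at all coordinates
  have hpos : ∀ᵐ y ∂P₀, 0 < p₀ y := by
    rw [hP₀, ae_iff]
    have hset : {y | ¬0 < p₀ y} = {y | p₀ y ≤ 0} := by
      ext y; simp [not_lt]
    have hz : ∫⁻ y in {y | p₀ y ≤ 0}, ENNReal.ofReal (p₀ y) ∂μ
        = ∫⁻ _ in {y | p₀ y ≤ 0}, (0 : ℝ≥0∞) ∂μ := by
      refine setLIntegral_congr_fun (measurableSet_le hpm measurable_const)
        (fun y hy => ?_)
      have : p₀ y = 0 := le_antisymm hy (hpnn y)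
      simp [this]
    rw [hset, withDensity_apply _ (measurableSet_le hpm measurable_const), hz]
    simp
  have hae : ∀ᵐ x ∂(Measure.pi fun _ : Fin n => P₀), ∀ k : Fin n, 0 < p₀ (x k) :=
    Filter.Eventually.filter_mono MeasureTheory.Measure.ae_pi_le_pi
      (Filter.eventually_pi fun _ => hpos)
  -- pointwise bound
  have hbound : ∀ᵐ x ∂(Measure.pi fun _ : Fin n => P₀),
      A.indicator (fun _ => (1 : ℝ≥0∞)) x
        ≤ ENNReal.ofReal (Real.exp ((n : ℝ) * b / 2)) * ∏ k : Fin n, g (x k) := by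
    filter_upwards [hae] with x hx
    by_cases hxA : x ∈ A
    · rw [Set.indicator_of_mem hxA]
      have hppos : 0 < ∏ k : Fin n, p₀ (x k) := Finset.prod_pos fun k _ => hx k
      have hqA : Real.exp (-(n : ℝ) * b) * ∏ k : Fin n, p₀ (x k) ≤ ∏ k : Fin n, q (x k) := hxA
      have hprod : (∏ k : Fin n, g (x k))
          = ENNReal.ofReal (∏ k : Fin n, Real.sqrt (q (x k)) / Real.sqrt (p₀ (x k))) := by
        rw [ENNReal.ofReal_prod_of_nonneg fun k _ =>
          div_nonneg (Real.sqrt_nonneg _) (Real.sqrt_nonneg _)]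
      rw [hprod, ← ENNReal.ofReal_mul (Real.exp_nonneg _), ENNReal.one_le_ofReal]
      have hdist : (∏ k : Fin n, Real.sqrt (q (x k)) / Real.sqrt (p₀ (x k)))
          = Real.sqrt (∏ k : Fin n, q (x k)) / Real.sqrt (∏ k : Fin n, p₀ (x k)) := by
        rw [Finset.prod_div_distrib,
          sqrt_finset_prod _ _ (fun k _ => hqnn (x k)),
          sqrt_finset_prod _ _ (fun k _ => hpnn (x k))]
      rw [hdist]
      have hsp : 0 < Real.sqrt (∏ k : Fin n, p₀ (x k)) := Real.sqrt_pos.mpr hppos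
      have hsqrt : Real.exp (-(n : ℝ) * b / 2) * Real.sqrt (∏ k : Fin n, p₀ (x k))
          ≤ Real.sqrt (∏ k : Fin n, q (x k)) := by
        have h := Real.sqrt_le_sqrt hqA
        have hex : Real.sqrt (Real.exp (-(n : ℝ) * b)) = Real.exp (-(n : ℝ) * b / 2) := by
          have : Real.exp (-(n : ℝ) * b) = Real.exp (-(n : ℝ) * b / 2) ^ 2 := by
            rw [sq, ← Real.exp_add]; ring_nf
          rw [this, Real.sqrt_sq (Real.exp_nonneg _)]
        rwa [Real.sqrt_mul (Real.exp_nonneg _), hex] at h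
      have h2 : Real.sqrt (∏ k : Fin n, p₀ (x k))
          ≤ Real.exp ((n : ℝ) * b / 2) * Real.sqrt (∏ k : Fin n, q (x k)) := by
        calc Real.sqrt (∏ k : Fin n, p₀ (x k))
            = Real.exp ((n : ℝ) * b / 2)
              * (Real.exp (-(n : ℝ) * b / 2) * Real.sqrt (∏ k : Fin n, p₀ (x k))) := by
              rw [← mul_assoc, ← Real.exp_add]
              ring_nf
              simp
          _ ≤ Real.exp ((n : ℝ) * b / 2) * Real.sqrt (∏ k : Fin n, q (x k)) :=
              mul_le_mul_of_nonneg_left hsqrt (Real.exp_nonneg _)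
      rw [mul_div_assoc']
      exact (one_le_div hsp).mpr h2
    · rw [Set.indicator_of_notMem hxA]
      exact zero_le
  -- putting everything together
  calc (Measure.pi fun _ : Fin n => P₀) A
      = ∫⁻ x, A.indicator (fun _ => (1 : ℝ≥0∞)) x ∂(Measure.pi fun _ : Fin n => P₀) :=
        (lintegral_indicator_one hA).symm
    _ ≤ ∫⁻ x, ENNReal.ofReal (Real.exp ((n : ℝ) * b / 2)) * ∏ k : Fin n, g (x k)
          ∂(Measure.pi fun _ : Fin n => P₀) := lintegral_mono_ae hbound
    _ = ENNReal.ofReal (Real.exp ((n : ℝ) * b / 2))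
          * ∫⁻ x, ∏ k : Fin n, g (x k) ∂(Measure.pi fun _ : Fin n => P₀) :=
        lintegral_const_mul _
          (Finset.measurable_prod Finset.univ fun k _ => hgm.comp (measurable_pi_apply k))
    _ = ENNReal.ofReal (Real.exp ((n : ℝ) * b / 2)) * (ENNReal.ofReal ρ) ^ n := by
        rw [lintegral_pi_prod_pow P₀ hgm n, hgint]
    _ ≤ ENNReal.ofReal (Real.exp ((n : ℝ) * b / 2 - (n : ℝ) * hellSq μ p₀ q / 2)) := by
        rw [← ENNReal.ofReal_pow hρ_nonneg, ← ENNReal.ofReal_mul (Real.exp_nonneg _)]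
        apply ENNReal.ofReal_le_ofReal
        calc Real.exp ((n : ℝ) * b / 2) * ρ ^ n
            ≤ Real.exp ((n : ℝ) * b / 2) * (Real.exp (-(hellSq μ p₀ q) / 2)) ^ n :=
              mul_le_mul_of_nonneg_left (pow_le_pow_left₀ hρ_nonneg hρ_le n)
                (Real.exp_nonneg _)
          _ = Real.exp ((n : ℝ) * b / 2 - (n : ℝ) * hellSq μ p₀ q / 2) := by
              rw [← Real.exp_nat_mul, ← Real.exp_add]
              congr 1
              ring
end

section
/- Let p₀ and q be probability densities on a σ-finite measure space (Ω, μ), let P₀ be the probability measure with density p₀, let X₁, …, Xₙ be i.i.d. with law P₀, and write v = d_H(p₀, q). Then for every constant 0 < c < 1, P₀^n( ∏_{k=1}^n q(X_k) ≥ exp(−n c v²) · ∏_{k=1}^n p₀(X_k) ) ≤ exp( −n v² (1 − c) / 2 ). -/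
open MeasureTheory Real

/-- Hellinger distance `d_H(p, q) = (∫ (√p − √q)² dμ)^{1/2}`. -/
noncomputable def hellDist {Ω : Type*} [MeasurableSpace Ω] (μ : Measure Ω) (p q : Ω → ℝ) : ℝ :=
  Real.sqrt (hellSq μ p q)

open scoped ENNReal

lemma lintegral_pi_prod_eq_pow {Ω : Type*} [MeasurableSpace Ω] (ν : Measure Ω) [SigmaFinite ν]
    {g : Ω → ℝ≥0∞} (hg : Measurable g) (n : ℕ) :
    ∫⁻ x : Fin n → Ω, ∏ i, g (x i) ∂(Measure.pi fun _ => ν) = (∫⁻ x, g x ∂ν) ^ n := by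
  induction n with
  | zero => simp
  | succ n ih =>
    have hmeas : Measurable fun x : Fin (n+1) → Ω => ∏ i, g (x i) :=
      Finset.measurable_prod _ fun i _ => hg.comp (measurable_pi_apply i)
    rw [← ((MeasureTheory.measurePreserving_piFinSuccAbove
        (fun _ : Fin (n+1) => ν) 0).symm).lintegral_comp hmeas]
    have hrw : ∀ a : Ω × (Fin n → Ω),
        (MeasurableEquiv.piFinSuccAbove (fun _ : Fin (n+1) => Ω) 0).symm a
          = Fin.cons a.1 a.2 := by
      intro a
      rw [MeasurableEquiv.piFinSuccAbove_symm_apply]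
      simp [Fin.insertNthEquiv]
    simp_rw [hrw, Fin.prod_univ_succ, Fin.cons_zero, Fin.cons_succ]
    have hm2 : AEMeasurable (fun y : Fin n → Ω => ∏ i, g (y i))
        (Measure.pi fun _ : Fin n => ν) :=
      (Finset.measurable_prod _ fun i _ => hg.comp (measurable_pi_apply i)).aemeasurable
    rw [lintegral_prod_mul hg.aemeasurable hm2]
    rw [ih, pow_succ]
    ring

/-- With `v = d_H(p₀, q)`, for every `0 < c < 1`,
`P₀^n( ∏ q(X_k) ≥ exp(−n c v²) ∏ p₀(X_k) ) ≤ exp( −n v² (1−c)/2 )`. -/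
theorem likelihood_ratio_tail_bound_hellinger {Ω : Type*} [MeasurableSpace Ω]
    (μ : Measure Ω) [SigmaFinite μ] (p₀ q : Ω → ℝ)
    (hp₀ : IsDensity μ p₀) (hq : IsDensity μ q)
    (P₀ : Measure Ω) [IsProbabilityMeasure P₀]
    (hP₀ : P₀ = μ.withDensity fun x => ENNReal.ofReal (p₀ x))
    (n : ℕ) (hn : 0 < n) (c : ℝ) (hc0 : 0 < c) (hc1 : c < 1) :
    (Measure.pi fun _ : Fin n => P₀)
        {x : Fin n → Ω |
          Real.exp (-(n : ℝ) * (c * hellDist μ p₀ q ^ 2)) * ∏ k : Fin n, p₀ (x k)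
            ≤ ∏ k : Fin n, q (x k)}
      ≤ ENNReal.ofReal (Real.exp (-(n : ℝ) * hellDist μ p₀ q ^ 2 * (1 - c) / 2)) := by
  obtain ⟨hp₀m, hp₀0, hp₀i, hp₀1⟩ := hp₀
  obtain ⟨hqm, hq0, hqi, hq1⟩ := hq
  set v2 := hellSq μ p₀ q with hv2def
  have hv2nonneg : 0 ≤ v2 := integral_nonneg fun x => sq_nonneg _
  have hd2 : hellDist μ p₀ q ^ 2 = v2 := Real.sq_sqrt hv2nonneg
  rw [hd2]
  -- measurability and integrability of √(p₀ q)
  have hsm : Measurable fun x => Real.sqrt (p₀ x) * Real.sqrt (q x) :=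
    (Real.continuous_sqrt.measurable.comp hp₀m).mul
      (Real.continuous_sqrt.measurable.comp hqm)
  have hsnn : ∀ x, 0 ≤ Real.sqrt (p₀ x) * Real.sqrt (q x) := fun x =>
    mul_nonneg (Real.sqrt_nonneg _) (Real.sqrt_nonneg _)
  have hadd : Integrable (fun x => p₀ x + q x) μ := hp₀i.add hqi
  have hsi : Integrable (fun x => Real.sqrt (p₀ x) * Real.sqrt (q x)) μ := by
    refine hadd.mono hsm.aestronglyMeasurable (ae_of_all _ fun x => ?_)
    rw [Real.norm_eq_abs, Real.norm_eq_abs, abs_of_nonneg (hsnn x),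
      abs_of_nonneg (add_nonneg (hp₀0 x) (hq0 x))]
    nlinarith [Real.sq_sqrt (hp₀0 x), Real.sq_sqrt (hq0 x), Real.sqrt_nonneg (p₀ x),
      Real.sqrt_nonneg (q x), sq_nonneg (Real.sqrt (p₀ x) - Real.sqrt (q x))]
  -- the key integral identity ∫ √(p₀ q) = 1 - v2/2
  have hkey : ∫ x, Real.sqrt (p₀ x) * Real.sqrt (q x) ∂μ = 1 - v2 / 2 := by
    have hpt : ∀ x, (Real.sqrt (p₀ x) - Real.sqrt (q x)) ^ 2
        = (p₀ x + q x) - 2 * (Real.sqrt (p₀ x) * Real.sqrt (q x)) := by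
      intro x
      have h1 := Real.sq_sqrt (hp₀0 x)
      have h2 := Real.sq_sqrt (hq0 x)
      ring_nf
      nlinarith [h1, h2]
    have : v2 = ∫ x, ((p₀ x + q x) - 2 * (Real.sqrt (p₀ x) * Real.sqrt (q x))) ∂μ := by
      rw [hv2def, hellSq]
      exact integral_congr_ae (ae_of_all _ hpt)
    rw [integral_sub hadd (hsi.const_mul 2), integral_add hp₀i hqi,
      integral_const_mul, hp₀1, hq1] at this
    linarith
  have hIexp : ∫ x, Real.sqrt (p₀ x) * Real.sqrt (q x) ∂μ ≤ Real.exp (-(v2 / 2)) := by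
    rw [hkey]
    have := Real.add_one_le_exp (-(v2 / 2))
    linarith
  -- the likelihood-ratio function
  set g : Ω → ℝ≥0∞ := fun x => ENNReal.ofReal (Real.sqrt (q x) / Real.sqrt (p₀ x)) with hgdef
  have hgm : Measurable g :=
    ENNReal.measurable_ofReal.comp ((Real.continuous_sqrt.measurable.comp hqm).div
      (Real.continuous_sqrt.measurable.comp hp₀m))
  -- the single-sample lintegral
  have hJ : ∫⁻ x, g x ∂P₀ = ENNReal.ofReal (∫ x, Real.sqrt (p₀ x) * Real.sqrt (q x) ∂μ) := by
    rw [hP₀, lintegral_withDensity_eq_lintegral_mul _ hp₀m.ennreal_ofReal hgm]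
    have hpt : ∀ x, ENNReal.ofReal (p₀ x) * g x
        = ENNReal.ofReal (Real.sqrt (p₀ x) * Real.sqrt (q x)) := by
      intro x
      rw [hgdef, ← ENNReal.ofReal_mul (hp₀0 x)]
      congr 1
      rcases eq_or_lt_of_le (hp₀0 x) with h | h
      · simp [← h]
      · have h0 : Real.sqrt (p₀ x) ≠ 0 := ne_of_gt (Real.sqrt_pos.mpr h)
        field_simp
        nlinarith [Real.sq_sqrt (hp₀0 x), Real.sqrt_nonneg (q x)]
    simp only [Pi.mul_apply]
    rw [lintegral_congr hpt,
      ← MeasureTheory.ofReal_integral_eq_lintegral_ofReal hsi (ae_of_all _ hsnn)]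
  have hJle : ∫⁻ x, g x ∂P₀ ≤ ENNReal.ofReal (Real.exp (-(v2 / 2))) := by
    rw [hJ]; exact ENNReal.ofReal_le_ofReal hIexp
  -- product lintegral
  have hprod : ∫⁻ x : Fin n → Ω, ∏ k, g (x k) ∂(Measure.pi fun _ : Fin n => P₀)
      ≤ ENNReal.ofReal (Real.exp (-((n : ℝ) * v2 / 2))) := by
    rw [lintegral_pi_prod_eq_pow P₀ hgm n]
    calc (∫⁻ x, g x ∂P₀) ^ n ≤ ENNReal.ofReal (Real.exp (-(v2 / 2))) ^ n :=
          pow_le_pow_left' hJle n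
      _ = ENNReal.ofReal (Real.exp (-(v2 / 2)) ^ n) := by
          rw [ENNReal.ofReal_pow (Real.exp_nonneg _)]
      _ = ENNReal.ofReal (Real.exp (-((n : ℝ) * v2 / 2))) := by
          rw [← Real.exp_nat_mul]
          congr 1
          ring
  -- null set where a coordinate density vanishes
  have hZ : P₀ {x : Ω | p₀ x = 0} = 0 := by
    have hZm : MeasurableSet {x : Ω | p₀ x = 0} := hp₀m (measurableSet_singleton 0)
    rw [hP₀, withDensity_apply _ hZm]
    have h0 : ∫⁻ x in {x : Ω | p₀ x = 0}, ENNReal.ofReal (p₀ x) ∂μ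
        = ∫⁻ _ in {x : Ω | p₀ x = 0}, (0 : ℝ≥0∞) ∂μ :=
      setLIntegral_congr_fun hZm (fun x hx => by
        simp only [Set.mem_setOf_eq] at hx; simp [hx])
    rw [h0]
    simp
  have hN : (Measure.pi fun _ : Fin n => P₀)
      (⋃ k : Fin n, Function.eval k ⁻¹' {x : Ω | p₀ x = 0}) = 0 :=
    measure_iUnion_null fun k => Measure.pi_eval_preimage_null (μ := fun _ : Fin n => P₀) (i := k) hZ
  -- the Markov threshold
  set a : ℝ≥0∞ := ENNReal.ofReal (Real.exp (-((n : ℝ) * (c * v2)) / 2)) with hadef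
  -- event inclusion
  have hincl : {x : Fin n → Ω |
      Real.exp (-(n : ℝ) * (c * v2)) * ∏ k : Fin n, p₀ (x k) ≤ ∏ k : Fin n, q (x k)}
      ⊆ {x : Fin n → Ω | a ≤ ∏ k, g (x k)}
        ∪ ⋃ k : Fin n, Function.eval k ⁻¹' {x : Ω | p₀ x = 0} := by
    intro x hx
    by_cases hxz : ∃ k, p₀ (x k) = 0
    · right
      obtain ⟨k, hk⟩ := hxz
      exact Set.mem_iUnion.mpr ⟨k, hk⟩
    · left
      push_neg at hxz
      have hpos : ∀ k, 0 < p₀ (x k) := fun k => lt_of_le_of_ne (hp₀0 (x k)) (Ne.symm (hxz k))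
      simp only [Set.mem_setOf_eq] at hx ⊢
      have hRnn : ∀ k : Fin n, 0 ≤ Real.sqrt (q (x k)) / Real.sqrt (p₀ (x k)) := fun k =>
        div_nonneg (Real.sqrt_nonneg _) (Real.sqrt_nonneg _)
      rw [hgdef]
      rw [← ENNReal.ofReal_prod_of_nonneg (fun k _ => hRnn k)]
      rw [hadef]
      apply ENNReal.ofReal_le_ofReal
      -- real inequality
      set R : ℝ := ∏ k : Fin n, Real.sqrt (q (x k)) / Real.sqrt (p₀ (x k)) with hRdef
      have hR0 : 0 ≤ R := Finset.prod_nonneg fun k _ => hRnn k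
      have hppos : 0 < ∏ k : Fin n, p₀ (x k) := Finset.prod_pos fun k _ => hpos k
      have hRsq : R ^ 2 = (∏ k : Fin n, q (x k)) / ∏ k : Fin n, p₀ (x k) := by
        rw [hRdef, ← Finset.prod_pow, ← Finset.prod_div_distrib]
        refine Finset.prod_congr rfl fun k _ => ?_
        rw [div_pow, Real.sq_sqrt (hq0 _), Real.sq_sqrt (hp₀0 _)]
      have hratio : Real.exp (-(n : ℝ) * (c * v2)) ≤ R ^ 2 := by
        rw [hRsq, le_div_iff₀ hppos]
        exact hx
      calc Real.exp (-((n : ℝ) * (c * v2)) / 2)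
          = Real.sqrt (Real.exp (-((n : ℝ) * (c * v2)))) := Real.exp_half _
        _ ≤ Real.sqrt (R ^ 2) := Real.sqrt_le_sqrt (by
            have : -((n : ℝ) * (c * v2)) = -(n : ℝ) * (c * v2) := by ring
            rw [this]; exact hratio)
        _ = R := Real.sqrt_sq hR0
    -- Markov + conclusion
  have hmarkov := mul_meas_ge_le_lintegral₀
    ((Finset.measurable_prod Finset.univ fun k (_ : k ∈ Finset.univ) =>
      hgm.comp (measurable_pi_apply k)).aemeasurable :
      AEMeasurable (fun x : Fin n → Ω => ∏ k, g (x k)) (Measure.pi fun _ : Fin n => P₀)) a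
  have ha_pos : 0 < Real.exp (-((n : ℝ) * (c * v2)) / 2) := Real.exp_pos _
  have ha0 : a ≠ 0 := by
    rw [hadef]; simpa using ha_pos
  have haT : a ≠ ⊤ := ENNReal.ofReal_ne_top
  have hT : (Measure.pi fun _ : Fin n => P₀) {x : Fin n → Ω | a ≤ ∏ k, g (x k)}
      ≤ a⁻¹ * ENNReal.ofReal (Real.exp (-((n : ℝ) * v2 / 2))) := by
    calc (Measure.pi fun _ : Fin n => P₀) {x : Fin n → Ω | a ≤ ∏ k, g (x k)}
        = a⁻¹ * (a * (Measure.pi fun _ : Fin n => P₀) {x | a ≤ ∏ k, g (x k)}) := by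
          rw [← mul_assoc, ENNReal.inv_mul_cancel ha0 haT, one_mul]
      _ ≤ a⁻¹ * ∫⁻ x : Fin n → Ω, ∏ k, g (x k) ∂(Measure.pi fun _ : Fin n => P₀) :=
          mul_le_mul_right hmarkov _
      _ ≤ a⁻¹ * ENNReal.ofReal (Real.exp (-((n : ℝ) * v2 / 2))) :=
          mul_le_mul_right hprod _
  have hainv : a⁻¹ = ENNReal.ofReal (Real.exp ((n : ℝ) * (c * v2) / 2)) := by
    rw [hadef, ← ENNReal.ofReal_inv_of_pos ha_pos, ← Real.exp_neg]
    congr 1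
    ring
  calc (Measure.pi fun _ : Fin n => P₀)
        {x : Fin n → Ω |
          Real.exp (-(n : ℝ) * (c * v2)) * ∏ k : Fin n, p₀ (x k) ≤ ∏ k : Fin n, q (x k)}
      ≤ (Measure.pi fun _ : Fin n => P₀)
          ({x : Fin n → Ω | a ≤ ∏ k, g (x k)}
            ∪ ⋃ k : Fin n, Function.eval k ⁻¹' {x : Ω | p₀ x = 0}) := measure_mono hincl
    _ ≤ (Measure.pi fun _ : Fin n => P₀) {x : Fin n → Ω | a ≤ ∏ k, g (x k)}
        + (Measure.pi fun _ : Fin n => P₀)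
            (⋃ k : Fin n, Function.eval k ⁻¹' {x : Ω | p₀ x = 0}) := measure_union_le _ _
    _ = (Measure.pi fun _ : Fin n => P₀) {x : Fin n → Ω | a ≤ ∏ k, g (x k)} := by
        rw [hN, add_zero]
    _ ≤ a⁻¹ * ENNReal.ofReal (Real.exp (-((n : ℝ) * v2 / 2))) := hT
    _ = ENNReal.ofReal (Real.exp (-(n : ℝ) * v2 * (1 - c) / 2)) := by
        rw [hainv, ← ENNReal.ofReal_mul (Real.exp_nonneg _), ← Real.exp_add]
        congr 2
        ring
end

section
/- Let p₀ and q₁ be probability densities on a σ-finite measure space (Ω, μ) with q₁ > 0 almost everywhere on {p₀ > 0}, let P₀ be the measure with density p₀, and let X₁, …, Xₙ be i.i.d. with law P₀. Write v₁ = d_H(p₀, q₁) and s = V(p₀, q₁), and assume 0 < s < ∞ and d_K(p₀, q₁) ≤ M v₁² for a constant M > 0. Then for every t > 0, setting d = M v₁² + s t, P₀^n( ∏_{k=1}^n q₁(X_k) ≤ exp(−n d) · ∏_{k=1}^n p₀(X_k) ) ≤ 1 / (n t² s). -/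
open MeasureTheory Real

/-- Kullback–Leibler divergence `d_K(p, q) = ∫ p log(p/q) dμ`. -/
noncomputable def klD {Ω : Type*} [MeasurableSpace Ω] (μ : Measure Ω) (p q : Ω → ℝ) : ℝ :=
  ∫ x, p x * Real.log (p x / q x) ∂μ

/-- Second moment `V(p, q) = ∫ p (log(p/q))² dμ`. -/
noncomputable def klV {Ω : Type*} [MeasurableSpace Ω] (μ : Measure Ω) (p q : Ω → ℝ) : ℝ :=
  ∫ x, p x * (Real.log (p x / q x)) ^ 2 ∂μ

lemma my_measurePreserving_eval {n : ℕ} {Ω : Type*} [MeasurableSpace Ω]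
    (P : Measure Ω) [IsProbabilityMeasure P] (i : Fin n) :
    MeasurePreserving (Function.eval i) (Measure.pi fun _ : Fin n => P) P := by
  refine ⟨measurable_pi_apply i, ?_⟩
  ext s hs
  rw [Measure.map_apply (measurable_pi_apply i) hs, Set.eval_preimage, Measure.pi_pi]
  classical
  simp [Function.update_apply, apply_ite P, Finset.prod_ite_eq']

lemma my_indepFun_eval {n : ℕ} {Ω : Type*} [MeasurableSpace Ω]
    (P : Measure Ω) [IsProbabilityMeasure P] {i j : Fin n} (hij : i ≠ j) :
    ProbabilityTheory.IndepFun (Function.eval i) (Function.eval j)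
      (Measure.pi fun _ : Fin n => P) := by
  classical
  rw [ProbabilityTheory.indepFun_iff_measure_inter_preimage_eq_mul]
  intro A B hA hB
  have hset : Function.eval i ⁻¹' A ∩ Function.eval j ⁻¹' B
      = Set.pi Set.univ (fun k => if k = i then A else if k = j then B else Set.univ) := by
    ext x
    simp only [Set.mem_inter_iff, Set.mem_preimage, Set.mem_univ_pi, Function.eval]
    constructor
    · rintro ⟨h1, h2⟩ k
      by_cases h : k = i <;> by_cases h' : k = j <;> simp_all
    · intro h
      refine ⟨?_, ?_⟩
      · have := h i; simpa using this
      · have := h j; simpa [Ne.symm hij] using this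
  have h1 : (Measure.pi fun _ : Fin n => P) (Function.eval i ⁻¹' A) = P A := by
    rw [← Measure.map_apply (measurable_pi_apply i) hA, (my_measurePreserving_eval P i).map_eq]
  have h2 : (Measure.pi fun _ : Fin n => P) (Function.eval j ⁻¹' B) = P B := by
    rw [← Measure.map_apply (measurable_pi_apply j) hB, (my_measurePreserving_eval P j).map_eq]
  rw [hset, Measure.pi_pi, h1, h2]
  rw [← Finset.prod_subset (Finset.subset_univ ({i, j} : Finset (Fin n)))
      (by intro k _ hk; simp only [Finset.mem_insert, Finset.mem_singleton, not_or] at hk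
          simp [hk.1, hk.2])]
  rw [Finset.prod_pair hij]
  simp [Ne.symm hij]

/-- Lower tail bound for the likelihood of the good density: with `v₁² = d_H²(p₀,q₁)`,
`s = V(p₀,q₁) ∈ (0,∞)` and `d_K(p₀,q₁) ≤ M v₁²`, for every `t > 0`, setting
`d = M v₁² + s t`, `P₀^n( ∏ q₁(X_k) ≤ exp(−n d) ∏ p₀(X_k) ) ≤ 1/(n t² s)`. -/
theorem good_density_lower_tail_bound {Ω : Type*} [MeasurableSpace Ω]
    (μ : Measure Ω) [SigmaFinite μ] (p₀ q₁ : Ω → ℝ)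
    (hp₀ : IsDensity μ p₀) (hq₁ : IsDensity μ q₁)
    (hq₁pos : ∀ᵐ x ∂μ, 0 < p₀ x → 0 < q₁ x)
    (hVint : Integrable (fun x => p₀ x * (Real.log (p₀ x / q₁ x)) ^ 2) μ)
    (hVpos : 0 < klV μ p₀ q₁)
    (M : ℝ) (hM : 0 < M)
    (hdK : klD μ p₀ q₁ ≤ M * hellSq μ p₀ q₁)
    (P₀ : Measure Ω) [IsProbabilityMeasure P₀]
    (hP₀ : P₀ = μ.withDensity fun x => ENNReal.ofReal (p₀ x))
    (n : ℕ) (hn : 0 < n) (t : ℝ) (ht : 0 < t) :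
    (Measure.pi fun _ : Fin n => P₀)
        {x : Fin n → Ω |
          ∏ k : Fin n, q₁ (x k) ≤
            Real.exp (-(n : ℝ) * (M * hellSq μ p₀ q₁ + klV μ p₀ q₁ * t)) *
              ∏ k : Fin n, p₀ (x k)}
      ≤ ENNReal.ofReal (1 / ((n : ℝ) * t ^ 2 * klV μ p₀ q₁)) := by
  classical
  obtain ⟨hp₀m, hp₀nn, hp₀int, hp₀one⟩ := hp₀
  obtain ⟨hq₁m, hq₁nn, hq₁int, hq₁one⟩ := hq₁
  set s : ℝ := klV μ p₀ q₁ with hs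
  set m : ℝ := klD μ p₀ q₁ with hmdef
  set v : ℝ := hellSq μ p₀ q₁ with hv
  set L : Ω → ℝ := fun x => Real.log (p₀ x / q₁ x) with hLdef
  have hLm : Measurable L := (hp₀m.div hq₁m).log
  have hnpos : (0 : ℝ) < (n : ℝ) := by exact_mod_cast hn
  -- transfer integrals from `P₀` to `μ`
  have hmeasNN : Measurable fun x => Real.toNNReal (p₀ x) := hp₀m.real_toNNReal
  have hPdens : P₀ = μ.withDensity fun x => ((Real.toNNReal (p₀ x) : NNReal) : ENNReal) := hP₀
  have hIeq : ∀ g : Ω → ℝ, ∫ x, g x ∂P₀ = ∫ x, p₀ x * g x ∂μ := by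
    intro g
    rw [hPdens, integral_withDensity_eq_integral_smul hmeasNN g]
    congr 1; funext x
    simp [NNReal.smul_def, Real.coe_toNNReal _ (hp₀nn x)]
  have hIntP : ∀ g : Ω → ℝ, Integrable (fun x => p₀ x * g x) μ → Integrable g P₀ := by
    intro g hg
    rw [hPdens, integrable_withDensity_iff_integrable_smul₀ hmeasNN.aemeasurable]
    apply hg.congr
    filter_upwards with x
    simp [NNReal.smul_def, Real.coe_toNNReal _ (hp₀nn x)]
  have hL2 : MemLp L 2 P₀ := by
    rw [memLp_two_iff_integrable_sq hLm.aestronglyMeasurable]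
    exact hIntP _ hVint
  have hL1 : Integrable L P₀ := hL2.integrable one_le_two
  have hmL : ∫ x, L x ∂P₀ = m := by rw [hIeq]; rfl
  have hsL : ∫ x, L x ^ 2 ∂P₀ = s := by rw [hIeq]; rfl
  -- a.e. positivity under `P₀`
  have hp₀pos : ∀ᵐ x ∂P₀, 0 < p₀ x := by
    have hAmeas : MeasurableSet {x | ¬ 0 < p₀ x} :=
      (measurableSet_lt measurable_const hp₀m).compl
    rw [ae_iff, hP₀, withDensity_apply _ hAmeas]
    have : ∀ᵐ x ∂(μ.restrict {x | ¬ 0 < p₀ x}), ENNReal.ofReal (p₀ x) = 0 := by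
      filter_upwards [ae_restrict_mem hAmeas] with x hx
      have : p₀ x = 0 := le_antisymm (not_lt.1 hx) (hp₀nn x)
      simp [this]
    rw [lintegral_congr_ae this, lintegral_zero]
  have hac : P₀ ≪ μ := by rw [hP₀]; exact withDensity_absolutelyContinuous μ _
  have hq₁posP : ∀ᵐ x ∂P₀, 0 < q₁ x := by
    filter_upwards [hp₀pos, hac.ae_le hq₁pos] with x h1 h2
    exact h2 h1
  -- the sum of log-likelihood ratios over the sample
  set Pn := Measure.pi fun _ : Fin n => P₀ with hPn
  have hmp : ∀ i : Fin n, MeasurePreserving (Function.eval i) Pn P₀ := fun i =>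
    my_measurePreserving_eval P₀ i
  set X : Fin n → (Fin n → Ω) → ℝ := fun i x => L (x i) with hX
  have hX2 : ∀ i, MemLp (X i) 2 Pn := fun i => hL2.comp_measurePreserving (hmp i)
  have hXint : ∀ i, Integrable (X i) Pn := fun i => (hX2 i).integrable one_le_two
  have hXmean : ∀ i, ∫ x, X i x ∂Pn = m := by
    intro i
    rw [← hmL, ← (hmp i).map_eq,
      integral_map (measurable_pi_apply i).aemeasurable hLm.aestronglyMeasurable]
  have hXsq : ∀ i, ∫ x, X i x ^ 2 ∂Pn = s := by
    intro i
    rw [← hsL, ← (hmp i).map_eq,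
      integral_map (measurable_pi_apply i).aemeasurable
        ((hLm.pow_const 2).aestronglyMeasurable)]
  have hXvar : ∀ i, ProbabilityTheory.variance (X i) Pn = s - m ^ 2 := by
    intro i
    rw [ProbabilityTheory.variance_eq_sub (hX2 i)]
    have h1 : ∫ x, (X i ^ 2) x ∂Pn = s := by
      simpa [Pi.pow_apply] using hXsq i
    rw [h1, hXmean i]
  set S : (Fin n → Ω) → ℝ := ∑ i : Fin n, X i with hSdef
  have hS2 : MemLp S 2 Pn := memLp_finset_sum' _ fun i _ => hX2 i
  have hSmean : ∫ x, S x ∂Pn = n * m := by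
    simp only [hSdef, Finset.sum_apply]
    rw [integral_finset_sum _ fun i _ => hXint i]
    simp [hXmean, Finset.card_univ, mul_comm]
  have hSvar : ProbabilityTheory.variance S Pn = n * (s - m ^ 2) := by
    rw [hSdef, ProbabilityTheory.IndepFun.variance_sum (fun i _ => hX2 i) ?_]
    · simp [hXvar, Finset.card_univ, mul_comm]; ring
    · intro i _ j _ hij
      exact ProbabilityTheory.IndepFun.comp (my_indepFun_eval P₀ hij) hLm hLm
  have hc : (0 : ℝ) < (n : ℝ) * s * t := by positivity
  have cheb := ProbabilityTheory.meas_ge_le_variance_div_sq (μ := Pn) hS2 hc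
  -- a.e. positivity on the product space
  have haepos : ∀ᵐ x ∂Pn, ∀ i, 0 < p₀ (x i) ∧ 0 < q₁ (x i) := by
    rw [ae_all_iff]
    intro i
    exact (MeasureTheory.Measure.tendsto_eval_ae_ae (μ := fun _ : Fin n => P₀) (i := i)).eventually
      (hp₀pos.and hq₁posP)
  -- inclusion of events (a.e.)
  have hsub : {x : Fin n → Ω |
        ∏ k : Fin n, q₁ (x k) ≤
          Real.exp (-(n : ℝ) * (M * v + s * t)) * ∏ k : Fin n, p₀ (x k)}
      ≤ᵐ[Pn] {ω | (n : ℝ) * s * t ≤ |S ω - ∫ x, S x ∂Pn|} := by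
    filter_upwards [haepos] with x hx hxE
    have hp : ∀ k, 0 < p₀ (x k) := fun k => (hx k).1
    have hq : ∀ k, 0 < q₁ (x k) := fun k => (hx k).2
    have hqprod : 0 < ∏ k : Fin n, q₁ (x k) := Finset.prod_pos fun k _ => hq k
    have hpprod : 0 < ∏ k : Fin n, p₀ (x k) := Finset.prod_pos fun k _ => hp k
    have hlog := Real.log_le_log hqprod hxE
    rw [Real.log_mul (Real.exp_ne_zero _) hpprod.ne', Real.log_exp,
      Real.log_prod (fun k _ => (hq k).ne'),
      Real.log_prod (fun k _ => (hp k).ne')] at hlog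
    have hSx : S x = ∑ k : Fin n, (Real.log (p₀ (x k)) - Real.log (q₁ (x k))) := by
      simp only [hSdef, Finset.sum_apply, hX, hLdef]
      exact Finset.sum_congr rfl fun k _ => Real.log_div (hp k).ne' (hq k).ne'
    rw [Finset.sum_sub_distrib] at hSx
    have hge : (n : ℝ) * (M * v + s * t) ≤ S x := by
      rw [hSx]; linarith
    have hmv : m ≤ M * v := hdK
    have h2 : (n : ℝ) * s * t ≤ S x - (n : ℝ) * m := by nlinarith
    rw [hSmean]
    exact le_trans h2 (le_abs_self _)
  calc Pn {x : Fin n → Ω |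
        ∏ k : Fin n, q₁ (x k) ≤
          Real.exp (-(n : ℝ) * (M * v + s * t)) * ∏ k : Fin n, p₀ (x k)}
      ≤ Pn {ω | (n : ℝ) * s * t ≤ |S ω - ∫ x, S x ∂Pn|} := measure_mono_ae hsub
    _ ≤ ENNReal.ofReal (ProbabilityTheory.variance S Pn / ((n : ℝ) * s * t) ^ 2) := cheb
    _ ≤ ENNReal.ofReal (1 / ((n : ℝ) * t ^ 2 * s)) := by
        apply ENNReal.ofReal_le_ofReal
        rw [hSvar]
        have h1 : (n : ℝ) * (s - m ^ 2) ≤ (n : ℝ) * s := by nlinarith [sq_nonneg m]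
        have h2 : ((n : ℝ) * (s - m ^ 2)) / ((n : ℝ) * s * t) ^ 2
            ≤ ((n : ℝ) * s) / ((n : ℝ) * s * t) ^ 2 := by
          apply div_le_div_of_nonneg_right h1 (by positivity) |>.trans_eq rfl
        refine h2.trans (le_of_eq ?_)
        field_simp
end

section
/- Finite-sample selection bound (conditional form of Theorem 1). Let p₀, q₁, …, q_m be probability densities on a σ-finite measure space (Ω, μ) with q₁ > 0 almost everywhere on {p₀ > 0}. Write v_i = d_H(p₀, q_i) for 1 ≤ i ≤ m and s = V(p₀, q₁), and assume 0 < s < ∞. Suppose there are constants M > 0, 0 < c < 1 and t > 0 such that d_K(p₀, q₁) ≤ M v₁² and M v₁² + s t < c v_i² for every 2 ≤ i ≤ m. Let P₀ be the measure with density p₀ and let X₁, …, Xₙ be i.i.d. with law P₀. Then P₀^n( ∃ i with 2 ≤ i ≤ m such that ∏_{k=1}^n q₁(X_k) ≤ ∏_{k=1}^n q_i(X_k) ) ≤ 1/(n t² s) + ∑_{i=2}^m exp( −n (1 − c) v_i² / 2 ). -/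
open MeasureTheory Real

open scoped NNReal ENNReal

section Aux

variable {α : Type*} [MeasurableSpace α]

lemma markov_bound (P : Measure α) [IsFiniteMeasure P]
    {f : α → ℝ} (hf0 : ∀ x, 0 ≤ f x) (hf : Integrable f P) {ε B : ℝ} (hε : 0 < ε)
    (hB : ∫ x, f x ∂P ≤ B) : P {x | ε ≤ f x} ≤ ENNReal.ofReal (B / ε) := by
  have h := mul_meas_ge_le_integral_of_nonneg (μ := P) (ae_of_all _ hf0) hf ε
  have h2 : (P {x | ε ≤ f x}).toReal ≤ B / ε := by
    rw [le_div_iff₀ hε]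
    unfold Measure.real at h
    nlinarith [h, hB]
  calc P {x | ε ≤ f x} = ENNReal.ofReal ((P {x | ε ≤ f x}).toReal) :=
        (ENNReal.ofReal_toReal (measure_ne_top _ _)).symm
    _ ≤ _ := ENNReal.ofReal_le_ofReal h2

lemma prod_ite_pair {n : ℕ} {j k : Fin n} (hjk : j ≠ k) (F G : Fin n → ℝ) :
    ∏ i, (if i = j then F i else if i = k then G i else 1) = F j * G k := by
  rw [← Finset.prod_subset (Finset.subset_univ ({j, k} : Finset (Fin n)))
      (by
        intro i _ hi
        simp only [Finset.mem_insert, Finset.mem_singleton] at hi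
        push_neg at hi
        simp [hi.1, hi.2])]
  rw [Finset.prod_pair hjk]
  simp [hjk, Ne.symm hjk]

variable (P : Measure α) [IsProbabilityMeasure P] {n : ℕ}

lemma pi_eval_integrable {f : α → ℝ} (hf : Integrable f P) (k : Fin n) :
    Integrable (fun x : Fin n → α => f (x k)) (Measure.pi fun _ => P) := by
  letI : MeasureSpace α := ⟨P⟩
  haveI : IsProbabilityMeasure (volume : Measure α) := ‹IsProbabilityMeasure P›
  have hpiv : (Measure.pi fun _ : Fin n => P) = (volume : Measure (Fin n → α)) := rfl
  have h : (fun x : Fin n → α => f (x k))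
      = fun x : Fin n → α => ∏ i, (if i = k then f (x i) else 1) := by
    funext x
    rw [Fintype.prod_ite_eq']
  rw [hpiv, h]
  exact Integrable.fintype_prod (f := fun i y => if i = k then f y else 1) (fun i => by
    by_cases hik : i = k
    · simp only [if_pos hik]
      exact hf
    · simp only [hik, if_false]
      exact integrable_const 1)

lemma pi_eval_integral (f : α → ℝ) (k : Fin n) :
    ∫ x : Fin n → α, f (x k) ∂(Measure.pi fun _ => P) = ∫ y, f y ∂P := by
  letI : MeasureSpace α := ⟨P⟩
  haveI : IsProbabilityMeasure (volume : Measure α) := ‹IsProbabilityMeasure P›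
  have hPv : P = (volume : Measure α) := rfl
  have hpiv : (Measure.pi fun _ : Fin n => P) = (volume : Measure (Fin n → α)) := rfl
  have h : (fun x : Fin n → α => f (x k))
      = fun x : Fin n → α => ∏ i, (if i = k then f (x i) else 1) := by
    funext x
    rw [Fintype.prod_ite_eq']
  rw [hpiv, h]
  erw [integral_fintype_prod_eq_prod (f := fun (i : Fin n) (y : α) => if i = k then f y else 1)]
  have h2 : ∀ i : Fin n, (∫ y : α, (if i = k then f y else 1))
      = (if i = k then ∫ y, f y ∂P else 1) := by
    intro i
    by_cases hik : i = k
    · simp [hik, ← hPv]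
    · simp [hik]
  rw [Finset.prod_congr rfl fun i _ => h2 i, Fintype.prod_ite_eq']

lemma pi_pair_integrable {f g : α → ℝ} (hf : Integrable f P) (hg : Integrable g P)
    {j k : Fin n} (hjk : j ≠ k) :
    Integrable (fun x : Fin n → α => f (x j) * g (x k)) (Measure.pi fun _ => P) := by
  letI : MeasureSpace α := ⟨P⟩
  haveI : IsProbabilityMeasure (volume : Measure α) := ‹IsProbabilityMeasure P›
  have hpiv : (Measure.pi fun _ : Fin n => P) = (volume : Measure (Fin n → α)) := rfl
  have h : (fun x : Fin n → α => f (x j) * g (x k))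
      = fun x : Fin n → α => ∏ i, (if i = j then f (x i) else if i = k then g (x i) else 1) := by
    funext x
    exact (prod_ite_pair hjk (fun i => f (x i)) (fun i => g (x i))).symm
  rw [hpiv, h]
  exact Integrable.fintype_prod
    (f := fun (i : Fin n) (y : α) => if i = j then f y else if i = k then g y else 1) (fun i => by
      by_cases hij : i = j
      · simp only [if_pos hij]
        exact hf
      · by_cases hik : i = k
        · simp only [if_neg hij, if_pos hik]
          exact hg
        · simp only [hij, hik, if_false]
          exact integrable_const 1)

lemma pi_pair_integral (f g : α → ℝ) {j k : Fin n} (hjk : j ≠ k) :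
    ∫ x : Fin n → α, f (x j) * g (x k) ∂(Measure.pi fun _ => P)
      = (∫ y, f y ∂P) * ∫ y, g y ∂P := by
  letI : MeasureSpace α := ⟨P⟩
  haveI : IsProbabilityMeasure (volume : Measure α) := ‹IsProbabilityMeasure P›
  have hPv : P = (volume : Measure α) := rfl
  have hpiv : (Measure.pi fun _ : Fin n => P) = (volume : Measure (Fin n → α)) := rfl
  have h : (fun x : Fin n → α => f (x j) * g (x k))
      = fun x : Fin n → α => ∏ i, (if i = j then f (x i) else if i = k then g (x i) else 1) := by
    funext x
    exact (prod_ite_pair hjk (fun i => f (x i)) (fun i => g (x i))).symm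
  rw [hpiv, h]
  erw [integral_fintype_prod_eq_prod
    (f := fun (i : Fin n) (y : α) => if i = j then f y else if i = k then g y else 1)]
  have h2 : ∀ i : Fin n, (∫ y : α, (if i = j then f y else if i = k then g y else 1))
      = (if i = j then ∫ y, f y ∂P else if i = k then ∫ y, g y ∂P else 1) := by
    intro i
    by_cases hij : i = j
    · simp [hij, ← hPv]
    · by_cases hik : i = k <;> simp [hij, hik, Ne.symm hjk, ← hPv]
  rw [Finset.prod_congr rfl fun i _ => h2 i, prod_ite_pair hjk]

lemma pi_prod_integrable {f : α → ℝ} (hf : Integrable f P) :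
    Integrable (fun x : Fin n → α => ∏ k, f (x k)) (Measure.pi fun _ => P) := by
  letI : MeasureSpace α := ⟨P⟩
  haveI : IsProbabilityMeasure (volume : Measure α) := ‹IsProbabilityMeasure P›
  have hpiv : (Measure.pi fun _ : Fin n => P) = (volume : Measure (Fin n → α)) := rfl
  rw [hpiv]
  exact Integrable.fintype_prod (f := fun _ => f) (fun _ => hf)

lemma pi_prod_integral (f : α → ℝ) :
    ∫ x : Fin n → α, ∏ k, f (x k) ∂(Measure.pi fun _ => P) = (∫ y, f y ∂P) ^ n := by
  letI : MeasureSpace α := ⟨P⟩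
  haveI : IsProbabilityMeasure (volume : Measure α) := ‹IsProbabilityMeasure P›
  have hPv : P = (volume : Measure α) := rfl
  have hpiv : (Measure.pi fun _ : Fin n => P) = (volume : Measure (Fin n → α)) := rfl
  rw [hpiv]
  erw [MeasureTheory.integral_fintype_prod_eq_pow (ι := Fin n) f, Fintype.card_fin, ← hPv]

lemma pi_ae {p : α → Prop} (hp : ∀ᵐ y ∂P, p y) :
    ∀ᵐ x : Fin n → α ∂(Measure.pi fun _ => P), ∀ k, p (x k) := by
  rw [ae_all_iff]
  intro k
  exact Measure.tendsto_eval_ae_ae.eventually hp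

end Aux

/-- Finite-sample selection bound (conditional form of Theorem 1): the probability that some
competing density `q i` (`2 ≤ i ≤ m`) attains likelihood at least that of `q 1` is at most
`1/(n t² s) + ∑_{i=2}^m exp(−n(1−c)v_i²/2)`. -/
theorem cv_selection_bound {Ω : Type*} [MeasurableSpace Ω]
    (μ : Measure Ω) [SigmaFinite μ] (p₀ : Ω → ℝ) (m : ℕ) (q : ℕ → Ω → ℝ)
    (hp₀ : IsDensity μ p₀)
    (hq : ∀ i ∈ Finset.Icc 1 m, IsDensity μ (q i))
    (hq₁pos : ∀ᵐ x ∂μ, 0 < p₀ x → 0 < q 1 x)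
    (hVint : Integrable (fun x => p₀ x * (Real.log (p₀ x / q 1 x)) ^ 2) μ)
    (hVpos : 0 < klV μ p₀ (q 1))
    (M c t : ℝ) (hM : 0 < M) (hc0 : 0 < c) (hc1 : c < 1) (ht : 0 < t)
    (hdK : klD μ p₀ (q 1) ≤ M * hellSq μ p₀ (q 1))
    (hsep : ∀ i ∈ Finset.Icc 2 m,
      M * hellSq μ p₀ (q 1) + klV μ p₀ (q 1) * t < c * hellSq μ p₀ (q i))
    (P₀ : Measure Ω) [IsProbabilityMeasure P₀]
    (hP₀ : P₀ = μ.withDensity fun x => ENNReal.ofReal (p₀ x))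
    (n : ℕ) (hn : 0 < n) :
    (Measure.pi fun _ : Fin n => P₀)
        {x : Fin n → Ω |
          ∃ i ∈ Finset.Icc 2 m, ∏ k : Fin n, q 1 (x k) ≤ ∏ k : Fin n, q i (x k)}
      ≤ ENNReal.ofReal (1 / ((n : ℝ) * t ^ 2 * klV μ p₀ (q 1)) +
          ∑ i ∈ Finset.Icc 2 m, Real.exp (-(n : ℝ) * (1 - c) * hellSq μ p₀ (q i) / 2)) := by
    classical
  rcases Finset.eq_empty_or_nonempty (Finset.Icc 2 m) with hIcc | hIcc
  · have hset : {x : Fin n → Ω |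
        ∃ i ∈ Finset.Icc 2 m, ∏ k : Fin n, q 1 (x k) ≤ ∏ k : Fin n, q i (x k)} = ∅ := by
      simp [hIcc]
    rw [hset]
    simp only [measure_empty]
    exact bot_le
  have hm2 : 2 ≤ m := by
    obtain ⟨i, hi⟩ := hIcc
    have := Finset.mem_Icc.1 hi
    omega
  obtain ⟨measp, p0nn, pInt, pOne⟩ := hp₀
  obtain ⟨measq1, q1nn, q1Int, q1One⟩ := hq 1 (Finset.mem_Icc.mpr ⟨le_refl 1, by omega⟩)
  have hn' : (0 : ℝ) < n := Nat.cast_pos.mpr hn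
  set s := klV μ p₀ (q 1) with hs_def
  set d := klD μ p₀ (q 1) with hd_def
  have hs0 : 0 < s := hVpos
  -- transfer integrals to `P₀`
  have measpn : Measurable fun x => Real.toNNReal (p₀ x) := measp.real_toNNReal
  have hofReal : (fun x => ENNReal.ofReal (p₀ x))
      = fun x => ((Real.toNNReal (p₀ x) : ℝ≥0) : ℝ≥0∞) := by
    funext x
    rfl
  have hPd : P₀ = μ.withDensity fun x => ((Real.toNNReal (p₀ x) : ℝ≥0) : ℝ≥0∞) := by
    rw [hP₀, hofReal]
  have hPint : ∀ f : Ω → ℝ, ∫ x, f x ∂P₀ = ∫ x, p₀ x * f x ∂μ := by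
    intro f
    rw [hPd, integral_withDensity_eq_integral_smul measpn]
    congr 1
    funext x
    simp [NNReal.smul_def, Real.coe_toNNReal _ (p0nn x)]
  have hPIntble : ∀ f : Ω → ℝ, Integrable (fun x => p₀ x * f x) μ → Integrable f P₀ := by
    intro f hf
    rw [hPd, integrable_withDensity_iff_integrable_smul measpn]
    have hrw : (fun x => (Real.toNNReal (p₀ x) : ℝ≥0) • f x) = fun x => p₀ x * f x := by
      funext x
      simp [NNReal.smul_def, Real.coe_toNNReal _ (p0nn x)]
    rw [hrw]
    exact hf
  set ℓ : Ω → ℝ := fun x => Real.log (p₀ x / q 1 x) with hℓ_def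
  have measℓ : Measurable ℓ := (measp.div measq1).log
  have hint2μ : Integrable (fun x => p₀ x * ℓ x ^ 2) μ := by
    simpa only [hℓ_def] using hVint
  have hint1μ : Integrable (fun x => p₀ x * ℓ x) μ := by
    have hgint : Integrable (fun x => (p₀ x + p₀ x * ℓ x ^ 2) / 2) μ :=
      (pInt.add hint2μ).div_const 2
    refine hgint.mono' ((measp.mul measℓ).aestronglyMeasurable) (ae_of_all _ fun x => ?_)
    rw [Real.norm_eq_abs, abs_mul, abs_of_nonneg (p0nn x)]
    have h1 : |ℓ x| ^ 2 = ℓ x ^ 2 := sq_abs _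
    nlinarith [mul_nonneg (p0nn x) (sq_nonneg (|ℓ x| - 1)), abs_nonneg (ℓ x), p0nn x]
  have intL : Integrable ℓ P₀ := hPIntble ℓ hint1μ
  have intL2 : Integrable (fun x => ℓ x ^ 2) P₀ := hPIntble _ hint2μ
  have EL : ∫ x, ℓ x ∂P₀ = d := by
    rw [hPint ℓ, hd_def]
    simp only [hℓ_def, klD]
  have EL2 : ∫ x, ℓ x ^ 2 ∂P₀ = s := by
    rw [hPint (fun x => ℓ x ^ 2), hs_def]
    simp only [hℓ_def, klV]
  set g : Ω → ℝ := fun x => ℓ x - d with hg_def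
  have intg : Integrable g P₀ := intL.sub (integrable_const d)
  have Eg : ∫ x, g x ∂P₀ = 0 := by
    simp only [hg_def]
    rw [integral_sub intL (integrable_const d), EL, integral_const]
    simp
  have hgrw : (fun x => g x ^ 2) = fun x => ℓ x ^ 2 - (2 * d) * ℓ x + d ^ 2 := by
    funext x
    simp only [hg_def]
    ring
  have intg2 : Integrable (fun x => g x ^ 2) P₀ := by
    rw [hgrw]
    exact (intL2.sub (intL.const_mul (2 * d))).add (integrable_const _)
  have Eg2 : ∫ x, g x ^ 2 ∂P₀ ≤ s := by
    have i1 : Integrable (fun x => ℓ x ^ 2 - 2 * d * ℓ x) P₀ :=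
      intL2.sub (intL.const_mul (2 * d))
    have i2 : Integrable (fun x => 2 * d * ℓ x) P₀ := intL.const_mul (2 * d)
    rw [hgrw, integral_add i1 (integrable_const _), integral_sub intL2 i2,
      integral_const_mul, EL, EL2, integral_const]
    simp only [measure_univ, probReal_univ, ENNReal.toReal_one, smul_eq_mul, one_mul]
    nlinarith [sq_nonneg d]
  -- product measure
  set ν := Measure.pi fun _ : Fin n => P₀ with hν_def
  haveI : IsProbabilityMeasure ν := by
    rw [hν_def]
    infer_instance
  set S : (Fin n → Ω) → ℝ := fun x => ∑ k, ℓ (x k) with hS_def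
  have hexpand : ∀ x : Fin n → Ω, (S x - n * d) ^ 2 = ∑ j, ∑ k, g (x j) * g (x k) := by
    intro x
    have h1 : S x - n * d = ∑ k, g (x k) := by
      simp only [hS_def, hg_def, Finset.sum_sub_distrib, Finset.sum_const, Finset.card_univ,
        Fintype.card_fin, nsmul_eq_mul]
    rw [h1, sq, Finset.sum_mul_sum]
  have termInt : ∀ j k : Fin n, Integrable (fun x : Fin n → Ω => g (x j) * g (x k)) ν := by
    intro j k
    by_cases hjk : j = k
    · subst hjk
      have h := pi_eval_integrable P₀ intg2 j (n := n)
      rw [hν_def]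
      refine h.congr (ae_of_all _ fun x => ?_)
      ring
    · rw [hν_def]
      exact pi_pair_integrable P₀ intg intg hjk
  have I_int : Integrable (fun x : Fin n → Ω => (S x - n * d) ^ 2) ν := by
    have hfe : (fun x : Fin n → Ω => (S x - n * d) ^ 2)
        = fun x => ∑ j, ∑ k, g (x j) * g (x k) := funext hexpand
    rw [hfe]
    exact integrable_finset_sum _ fun j _ => integrable_finset_sum _ fun k _ => termInt j k
  have I_le : ∫ x, (S x - n * d) ^ 2 ∂ν ≤ n * s := by
    simp only [hexpand]
    rw [integral_finset_sum _ fun j _ => integrable_finset_sum _ fun k _ => termInt j k]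
    have hinner : ∀ j : Fin n, ∫ x, ∑ k, g (x j) * g (x k) ∂ν
        = ∑ k, ∫ x, g (x j) * g (x k) ∂ν :=
      fun j => integral_finset_sum _ fun k _ => termInt j k
    rw [Finset.sum_congr rfl fun j _ => hinner j]
    have hterm : ∀ j k : Fin n, ∫ x, g (x j) * g (x k) ∂ν
        = if j = k then ∫ y, g y ^ 2 ∂P₀ else 0 := by
      intro j k
      by_cases hjk : j = k
      · subst hjk
        rw [if_pos rfl]
        have hfe2 : (fun x : Fin n → Ω => g (x j) * g (x j))
            = fun x : Fin n → Ω => (fun y => g y ^ 2) (x j) := by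
          funext x
          ring
        rw [hfe2, hν_def, pi_eval_integral P₀ (fun y => g y ^ 2) j]
      · rw [if_neg hjk, hν_def, pi_pair_integral P₀ g g hjk, Eg, zero_mul]
    rw [Finset.sum_congr rfl fun j _ => Finset.sum_congr rfl fun k _ => hterm j k]
    simp only [Finset.sum_ite_eq, Finset.mem_univ, if_true]
    rw [Finset.sum_const, Finset.card_univ, Fintype.card_fin, nsmul_eq_mul]
    exact mul_le_mul_of_nonneg_left Eg2 (Nat.cast_nonneg n)
  set G : Set (Fin n → Ω) := {x | (n : ℝ) * (d + t * s) ≤ S x} with hG_def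
  have hnts : 0 < (n : ℝ) * t * s := mul_pos (mul_pos hn' ht) hs0
  have hGbound : ν G ≤ ENNReal.ofReal (1 / ((n : ℝ) * t ^ 2 * s)) := by
    have hsub : G ⊆ {x : Fin n → Ω | ((n : ℝ) * t * s) ^ 2 ≤ (S x - n * d) ^ 2} := by
      intro x hx
      simp only [hG_def, Set.mem_setOf_eq] at hx ⊢
      have h1 : (n : ℝ) * t * s ≤ S x - n * d := by nlinarith
      exact pow_le_pow_left₀ hnts.le h1 2
    calc ν G ≤ ν {x : Fin n → Ω | ((n : ℝ) * t * s) ^ 2 ≤ (S x - n * d) ^ 2} :=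
          measure_mono hsub
      _ ≤ ENNReal.ofReal (((n : ℝ) * s) / ((n : ℝ) * t * s) ^ 2) :=
          markov_bound ν (fun x => sq_nonneg _) I_int (pow_pos hnts 2) I_le
      _ = ENNReal.ofReal (1 / ((n : ℝ) * t ^ 2 * s)) := by
          congr 1
          field_simp
  -- a.e. positivity
  have hq1ae : ∀ᵐ y ∂P₀, 0 < p₀ y ∧ 0 < q 1 y := by
    have h1 : P₀ {y | ¬ 0 < p₀ y} = 0 := by
      have hms : MeasurableSet {y | ¬ 0 < p₀ y} := by
        have : {y | ¬ 0 < p₀ y} = {y | p₀ y ≤ 0} := by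
          ext y; simp [not_lt]
        rw [this]
        exact measurableSet_le measp measurable_const
      rw [hP₀, withDensity_apply _ hms]
      have hz : ∫⁻ y in {y | ¬ 0 < p₀ y}, ENNReal.ofReal (p₀ y) ∂μ
          = ∫⁻ y in {y | ¬ 0 < p₀ y}, (0 : ℝ≥0∞) ∂μ :=
        setLIntegral_congr_fun hms (fun y hy => by
          simp only [Set.mem_setOf_eq, not_lt] at hy
          exact ENNReal.ofReal_eq_zero.mpr hy)
      rw [hz]
      simp
    have h2 : P₀ {y | 0 < p₀ y ∧ ¬ 0 < q 1 y} = 0 := by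
      have hμ2 : μ {y | 0 < p₀ y ∧ ¬ 0 < q 1 y} = 0 := by
        have hset2 : {y | 0 < p₀ y ∧ ¬ 0 < q 1 y} = {y | ¬ (0 < p₀ y → 0 < q 1 y)} := by
          ext y
          simp [Classical.not_imp]
        rw [hset2]
        exact ae_iff.mp hq₁pos
      rw [hP₀]
      exact withDensity_absolutelyContinuous μ _ hμ2
    have h3 : P₀ {y | ¬ (0 < p₀ y ∧ 0 < q 1 y)} = 0 := by
      refine measure_mono_null ?_ (measure_union_null h1 h2)
      intro y hy
      simp only [Set.mem_setOf_eq, Set.mem_union] at hy ⊢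
      by_cases h : 0 < p₀ y
      · right; exact ⟨h, fun hq' => hy ⟨h, hq'⟩⟩
      · left; exact h
    exact ae_iff.mpr h3
  have haeAll : ∀ᵐ x ∂ν, ∀ k, 0 < p₀ (x k) ∧ 0 < q 1 (x k) := by
    rw [hν_def]
    exact pi_ae P₀ hq1ae
  have hnull : ν {x : Fin n → Ω | ¬ ∀ k, 0 < p₀ (x k) ∧ 0 < q 1 (x k)} = 0 :=
    ae_iff.mp haeAll
  -- per-competitor bound
  have hIbound : ∀ i ∈ Finset.Icc 2 m,
      ν (Gᶜ ∩ {x : Fin n → Ω | ∏ k, q 1 (x k) ≤ ∏ k, q i (x k)})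
        ≤ ENNReal.ofReal (Real.exp (-(n : ℝ) * (1 - c) * hellSq μ p₀ (q i) / 2)) := by
    intro i hi
    obtain ⟨hi2, him⟩ := Finset.mem_Icc.1 hi
    obtain ⟨measqi, qinn, qiInt, qiOne⟩ := hq i (Finset.mem_Icc.mpr ⟨by omega, him⟩)
    set w := hellSq μ p₀ (q i) with hw_def
    have hw0 : 0 ≤ w := by
      rw [hw_def]
      exact integral_nonneg fun x => sq_nonneg _
    have sqint : Integrable (fun x => Real.sqrt (p₀ x) * Real.sqrt (q i x)) μ := by
      have hbint : Integrable (fun x => (p₀ x + q i x) / 2) μ := (pInt.add qiInt).div_const 2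
      refine hbint.mono'
        ((measp.sqrt.mul measqi.sqrt).aestronglyMeasurable) (ae_of_all _ fun x => ?_)
      rw [Real.norm_eq_abs,
        abs_of_nonneg (mul_nonneg (Real.sqrt_nonneg _) (Real.sqrt_nonneg _))]
      nlinarith [Real.sq_sqrt (p0nn x), Real.sq_sqrt (qinn x),
        sq_nonneg (Real.sqrt (p₀ x) - Real.sqrt (q i x))]
    have hexp2 : ∀ x, (Real.sqrt (p₀ x) - Real.sqrt (q i x)) ^ 2
        = (p₀ x + q i x) - 2 * (Real.sqrt (p₀ x) * Real.sqrt (q i x)) := by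
      intro x
      rw [sub_sq, Real.sq_sqrt (p0nn x), Real.sq_sqrt (qinn x)]
      ring
    have hwEq : w = 2 - 2 * ∫ x, Real.sqrt (p₀ x) * Real.sqrt (q i x) ∂μ := by
      rw [hw_def]
      calc hellSq μ p₀ (q i)
          = ∫ x, ((p₀ x + q i x) - 2 * (Real.sqrt (p₀ x) * Real.sqrt (q i x))) ∂μ :=
            integral_congr_ae (ae_of_all _ hexp2)
        _ = (∫ x, (p₀ x + q i x) ∂μ)
            - ∫ x, 2 * (Real.sqrt (p₀ x) * Real.sqrt (q i x)) ∂μ :=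
            integral_sub (pInt.add qiInt) (sqint.const_mul 2)
        _ = 2 - 2 * ∫ x, Real.sqrt (p₀ x) * Real.sqrt (q i x) ∂μ := by
            have i3 : Integrable (fun x => p₀ x + q i x) μ := pInt.add qiInt
            rw [integral_add pInt qiInt, pOne, qiOne, integral_const_mul]
            norm_num
    have hellEq : ∫ x, Real.sqrt (p₀ x) * Real.sqrt (q i x) ∂μ = 1 - w / 2 := by
      rw [hwEq]; ring
    have hIntNonneg : (0 : ℝ) ≤ 1 - w / 2 := hellEq ▸
      integral_nonneg fun x => mul_nonneg (Real.sqrt_nonneg _) (Real.sqrt_nonneg _)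
    set r : Ω → ℝ := fun x => Real.sqrt (q i x) / Real.sqrt (p₀ x) with hr_def
    have hr0 : ∀ x, 0 ≤ r x := fun x => div_nonneg (Real.sqrt_nonneg _) (Real.sqrt_nonneg _)
    have hpr : ∀ x, p₀ x * r x = Real.sqrt (p₀ x) * Real.sqrt (q i x) := by
      intro x
      simp only [hr_def]
      rcases (p0nn x).eq_or_lt with h0 | h0
      · simp [← h0]
      · have hsp : 0 < Real.sqrt (p₀ x) := Real.sqrt_pos.mpr h0
        have key2 : Real.sqrt (p₀ x) ^ 2 = p₀ x := Real.sq_sqrt h0.le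
        field_simp
        linear_combination (-Real.sqrt (q i x)) * key2
    have intr : Integrable r P₀ := by
      refine hPIntble r ?_
      have hfe : (fun x => p₀ x * r x) = fun x => Real.sqrt (p₀ x) * Real.sqrt (q i x) :=
        funext hpr
      rw [hfe]
      exact sqint
    have Er : ∫ y, r y ∂P₀ = 1 - w / 2 := by
      rw [hPint r]
      simp only [hpr]
      exact hellEq
    have intF : Integrable (fun x : Fin n → Ω => ∏ k, r (x k)) ν := by
      rw [hν_def]
      exact pi_prod_integrable P₀ intr
    have EF : ∫ x, ∏ k, r (x k) ∂ν = (1 - w / 2) ^ n := by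
      rw [hν_def, pi_prod_integral P₀ r, Er]
    set ε : ℝ := Real.exp (-(n : ℝ) * (c * w) / 2) with hε_def
    have hεpos : 0 < ε := Real.exp_pos _
    have hincl : (Gᶜ ∩ {x : Fin n → Ω | ∏ k, q 1 (x k) ≤ ∏ k, q i (x k)})
        ⊆ {x : Fin n → Ω | ε ≤ ∏ k, r (x k)}
          ∪ {x : Fin n → Ω | ¬ ∀ k, 0 < p₀ (x k) ∧ 0 < q 1 (x k)} := by
      intro x hx
      by_cases hA : ∀ k, 0 < p₀ (x k) ∧ 0 < q 1 (x k)
      swap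
      · right; exact hA
      left
      obtain ⟨hxG, hxE⟩ := hx
      simp only [Set.mem_compl_iff, hG_def, Set.mem_setOf_eq, not_le] at hxG
      simp only [Set.mem_setOf_eq] at hxE ⊢
      have hsep' := hsep i hi
      rw [← hw_def] at hsep'
      have hdts : d + t * s < c * w := by linarith
      have hScw : S x < (n : ℝ) * (c * w) :=
        lt_trans hxG (mul_lt_mul_of_pos_left hdts hn')
      have hq1prod : ∏ k, q 1 (x k) = (∏ k, p₀ (x k)) * Real.exp (-S x) := by
        have hfac : ∀ k : Fin n, q 1 (x k) = p₀ (x k) * Real.exp (-ℓ (x k)) := by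
          intro k
          obtain ⟨hp, hq1x⟩ := hA k
          simp only [hℓ_def]
          rw [Real.exp_neg, Real.exp_log (div_pos hp hq1x)]
          field_simp
        rw [Finset.prod_congr rfl fun k _ => hfac k, Finset.prod_mul_distrib]
        congr 1
        rw [← Real.exp_sum]
        congr 1
        simp only [hS_def]
        rw [← Finset.sum_neg_distrib]
      have hppos : 0 < ∏ k, p₀ (x k) := Finset.prod_pos fun k _ => (hA k).1
      have hF2 : (∏ k, r (x k)) ^ 2 = (∏ k, q i (x k)) / (∏ k, p₀ (x k)) := by
        simp only [hr_def]
        rw [← Finset.prod_pow]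
        rw [Finset.prod_congr rfl fun k _ => by
          rw [div_pow, Real.sq_sqrt (qinn (x k)), Real.sq_sqrt (p0nn (x k))]]
        rw [Finset.prod_div_distrib]
      have hqq : Real.exp (-S x) * (∏ k, p₀ (x k)) ≤ ∏ k, q i (x k) := by
        calc Real.exp (-S x) * (∏ k, p₀ (x k)) = ∏ k, q 1 (x k) := by
              rw [hq1prod]; ring
          _ ≤ ∏ k, q i (x k) := hxE
      have hεF : ε ^ 2 ≤ (∏ k, r (x k)) ^ 2 := by
        rw [hF2]
        have hε2 : ε ^ 2 = Real.exp (-((n : ℝ) * (c * w))) := by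
          rw [hε_def, sq, ← Real.exp_add]
          congr 1
          ring
        rw [hε2, le_div_iff₀ hppos]
        calc Real.exp (-((n : ℝ) * (c * w))) * ∏ k, p₀ (x k)
            ≤ Real.exp (-S x) * ∏ k, p₀ (x k) := by
              have := Real.exp_le_exp.mpr (neg_le_neg hScw.le)
              exact mul_le_mul_of_nonneg_right this hppos.le
          _ ≤ ∏ k, q i (x k) := hqq
      have hFnn : 0 ≤ ∏ k, r (x k) := Finset.prod_nonneg fun k _ => hr0 _
      exact (pow_le_pow_iff_left₀ hεpos.le hFnn (by norm_num)).mp hεF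
    calc ν (Gᶜ ∩ {x : Fin n → Ω | ∏ k, q 1 (x k) ≤ ∏ k, q i (x k)})
        ≤ ν ({x : Fin n → Ω | ε ≤ ∏ k, r (x k)}
            ∪ {x : Fin n → Ω | ¬ ∀ k, 0 < p₀ (x k) ∧ 0 < q 1 (x k)}) := measure_mono hincl
      _ ≤ ν {x : Fin n → Ω | ε ≤ ∏ k, r (x k)}
            + ν {x : Fin n → Ω | ¬ ∀ k, 0 < p₀ (x k) ∧ 0 < q 1 (x k)} := measure_union_le _ _
      _ = ν {x : Fin n → Ω | ε ≤ ∏ k, r (x k)} := by rw [hnull, add_zero]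
      _ ≤ ENNReal.ofReal ((1 - w / 2) ^ n / ε) :=
          markov_bound ν (fun x => Finset.prod_nonneg fun k _ => hr0 _) intF hεpos (le_of_eq EF)
      _ ≤ ENNReal.ofReal (Real.exp (-(n : ℝ) * (1 - c) * w / 2)) := by
          apply ENNReal.ofReal_le_ofReal
          have h1 : (1 - w / 2) ^ n ≤ Real.exp (-(n : ℝ) * w / 2) := by
            calc (1 - w / 2) ^ n ≤ Real.exp (-(w / 2)) ^ n := by
                  apply pow_le_pow_left₀ hIntNonneg
                  linarith [Real.add_one_le_exp (-(w / 2))]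
              _ = Real.exp ((n : ℝ) * (-(w / 2))) := (Real.exp_nat_mul _ n).symm
              _ = Real.exp (-(n : ℝ) * w / 2) := by ring_nf
          have h2 : Real.exp (-(n : ℝ) * w / 2) / ε = Real.exp (-(n : ℝ) * (1 - c) * w / 2) := by
            rw [hε_def, ← Real.exp_sub]
            congr 1
            ring
          calc (1 - w / 2) ^ n / ε ≤ Real.exp (-(n : ℝ) * w / 2) / ε := by gcongr
            _ = Real.exp (-(n : ℝ) * (1 - c) * w / 2) := h2
  -- combine
  have hsubmain : {x : Fin n → Ω |
        ∃ i ∈ Finset.Icc 2 m, ∏ k : Fin n, q 1 (x k) ≤ ∏ k : Fin n, q i (x k)}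
      ⊆ G ∪ ⋃ i ∈ Finset.Icc 2 m,
          (Gᶜ ∩ {x : Fin n → Ω | ∏ k, q 1 (x k) ≤ ∏ k, q i (x k)}) := by
    intro x hx
    obtain ⟨i, hi, hle⟩ := hx
    by_cases hxG : x ∈ G
    · left; exact hxG
    · right
      exact Set.mem_biUnion hi ⟨hxG, hle⟩
  calc ν {x : Fin n → Ω |
        ∃ i ∈ Finset.Icc 2 m, ∏ k : Fin n, q 1 (x k) ≤ ∏ k : Fin n, q i (x k)}
      ≤ ν (G ∪ ⋃ i ∈ Finset.Icc 2 m,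
          (Gᶜ ∩ {x : Fin n → Ω | ∏ k, q 1 (x k) ≤ ∏ k, q i (x k)})) := measure_mono hsubmain
    _ ≤ ν G + ν (⋃ i ∈ Finset.Icc 2 m,
          (Gᶜ ∩ {x : Fin n → Ω | ∏ k, q 1 (x k) ≤ ∏ k, q i (x k)})) := measure_union_le _ _
    _ ≤ ν G + ∑ i ∈ Finset.Icc 2 m,
          ν (Gᶜ ∩ {x : Fin n → Ω | ∏ k, q 1 (x k) ≤ ∏ k, q i (x k)}) :=
        add_le_add_right (measure_biUnion_finset_le _ _) _
    _ ≤ ENNReal.ofReal (1 / ((n : ℝ) * t ^ 2 * s))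
          + ∑ i ∈ Finset.Icc 2 m,
              ENNReal.ofReal (Real.exp (-(n : ℝ) * (1 - c) * hellSq μ p₀ (q i) / 2)) :=
        add_le_add hGbound (Finset.sum_le_sum hIbound)
    _ = ENNReal.ofReal (1 / ((n : ℝ) * t ^ 2 * s) +
          ∑ i ∈ Finset.Icc 2 m, Real.exp (-(n : ℝ) * (1 - c) * hellSq μ p₀ (q i) / 2)) := by
        rw [← ENNReal.ofReal_sum_of_nonneg fun i _ => (Real.exp_pos _).le,
          ← ENNReal.ofReal_add (by positivity) (Finset.sum_nonneg fun i _ => (Real.exp_pos _).le)]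
end

section
/- Asymptotic consistency of cross validation (Theorem 1, conditional form with deterministic candidate sequences). Let p₀ be a probability density on a σ-finite measure space (Ω, μ), and for each n let q_{n,1}, …, q_{n,m_n} be probability densities with q_{n,1} > 0 almost everywhere on {p₀ > 0}. Write v_{n,i} = d_H(p₀, q_{n,i}) and s_n = V(p₀, q_{n,1}), and assume 0 < s_n < ∞ for all n. Suppose there exist constants M > 0, 0 < c < 1 and positive reals t_n such that: (i) d_K(p₀, q_{n,1}) ≤ M v_{n,1}² for all n; (ii) M v_{n,1}² + s_n t_n < c v_{n,i}² for all n and all 2 ≤ i ≤ m_n; (iii) n t_n² s_n → ∞; (iv) n · min_{2 ≤ i ≤ m_n} v_{n,i}² → ∞; and (v) log m_n = o( n · min_{2 ≤ i ≤ m_n} v_{n,i}² ). Let X₁, …, Xₙ be i.i.d. with law P₀ = μ.withDensity p₀. Then P₀^n( ∏_{k=1}^n q_{n,1}(X_k) > ∏_{k=1}^n q_{n,i}(X_k) for every 2 ≤ i ≤ m_n ) → 1 as n → ∞. -/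
open MeasureTheory Real Filter

namespace CVaux

open scoped ENNReal NNReal

variable {Ω : Type*} [MeasurableSpace Ω] {μ : Measure Ω}

lemma integral_wd {p : Ω → ℝ} (hp : Measurable p) (hp0 : ∀ x, 0 ≤ p x) (g : Ω → ℝ) :
    ∫ x, g x ∂(μ.withDensity fun x => ENNReal.ofReal (p x)) = ∫ x, p x * g x ∂μ := by
  have h1 : (fun x => ENNReal.ofReal (p x)) = (fun x => ((p x).toNNReal : ℝ≥0∞)) := rfl
  rw [h1, integral_withDensity_eq_integral_smul hp.real_toNNReal]
  refine integral_congr_ae (Filter.Eventually.of_forall fun x => ?_)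
  simp [NNReal.smul_def, Real.coe_toNNReal _ (hp0 x)]

lemma integrable_wd {p : Ω → ℝ} (hp : Measurable p) (hp0 : ∀ x, 0 ≤ p x) {g : Ω → ℝ} :
    Integrable g (μ.withDensity fun x => ENNReal.ofReal (p x)) ↔
      Integrable (fun x => p x * g x) μ := by
  have h1 : (fun x => ENNReal.ofReal (p x)) = (fun x => ((p x).toNNReal : ℝ≥0∞)) := rfl
  rw [h1, integrable_withDensity_iff_integrable_smul hp.real_toNNReal]
  constructor <;> intro h <;> refine h.congr (Filter.Eventually.of_forall fun x => ?_) <;>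
    simp [NNReal.smul_def, Real.coe_toNNReal _ (hp0 x)]

lemma sqrt_finset_prod {α : Type*} (s : Finset α) (f : α → ℝ) (hf : ∀ a ∈ s, 0 ≤ f a) :
    Real.sqrt (∏ a ∈ s, f a) = ∏ a ∈ s, Real.sqrt (f a) := by
  induction s using Finset.cons_induction with
  | empty => simp
  | cons a s ha ih =>
    rw [Finset.prod_cons, Finset.prod_cons,
      Real.sqrt_mul (hf a (Finset.mem_cons_self a s)),
      ih fun b hb => hf b (Finset.mem_cons_of_mem hb)]

lemma sqrt_exp (z : ℝ) : Real.sqrt (Real.exp z) = Real.exp (z / 2) := by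
  rw [show Real.exp z = Real.exp (z / 2) ^ 2 by rw [sq, ← Real.exp_add]; ring_nf,
    Real.sqrt_sq (Real.exp_pos _).le]

lemma sqrt_mul_integrable {p q : Ω → ℝ} (hp : IsDensity μ p) (hq : IsDensity μ q) :
    Integrable (fun x => Real.sqrt (p x * q x)) μ := by
  obtain ⟨hpm, hp0, hpi, -⟩ := hp
  obtain ⟨hqm, hq0, hqi, -⟩ := hq
  refine Integrable.mono' ((hpi.add hqi).div_const 2)
    ((hpm.mul hqm).sqrt.aestronglyMeasurable)
    (Filter.Eventually.of_forall fun x => ?_)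
  rw [Real.norm_eq_abs, abs_of_nonneg (Real.sqrt_nonneg _)]
  calc Real.sqrt (p x * q x) ≤ Real.sqrt (((p x + q x) / 2) ^ 2) :=
        Real.sqrt_le_sqrt (by nlinarith [sq_nonneg (p x - q x)])
    _ = (p x + q x) / 2 := Real.sqrt_sq (by linarith [hp0 x, hq0 x])

lemma integral_sqrt_mul {p q : Ω → ℝ} (hp : IsDensity μ p) (hq : IsDensity μ q) :
    ∫ x, Real.sqrt (p x * q x) ∂μ = 1 - hellSq μ p q / 2 := by
  obtain ⟨hpm, hp0, hpi, hp1⟩ := hp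
  obtain ⟨hqm, hq0, hqi, hq1⟩ := hq
  have hs := sqrt_mul_integrable (μ := μ) ⟨hpm, hp0, hpi, hp1⟩ ⟨hqm, hq0, hqi, hq1⟩
  have key : (fun x => (Real.sqrt (p x) - Real.sqrt (q x)) ^ 2)
      = fun x => p x + q x - 2 * Real.sqrt (p x * q x) := by
    funext x
    rw [sub_sq, Real.sq_sqrt (hp0 x), Real.sq_sqrt (hq0 x),
      Real.sqrt_mul (hp0 x) (q x)]
    ring
  have hpq : Integrable (fun x => p x + q x) μ := hpi.add hqi
  have : hellSq μ p q = 1 + 1 - 2 * ∫ x, Real.sqrt (p x * q x) ∂μ := by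
    rw [hellSq, key, integral_sub hpq (hs.const_mul 2),
      integral_add hpi hqi, integral_const_mul, hp1, hq1]
  linarith

lemma integrable_pi_prod {n : ℕ} (ν : Measure Ω) [IsProbabilityMeasure ν]
    (f : Fin n → Ω → ℝ) (hf : ∀ i, Integrable (f i) ν) :
    Integrable (fun x : Fin n → Ω => ∏ i, f i (x i)) (Measure.pi fun _ => ν) := by
  letI : MeasureSpace Ω := ⟨ν⟩
  haveI : IsProbabilityMeasure (volume : Measure Ω) := ‹IsProbabilityMeasure ν›
  exact Integrable.fintype_prod (𝕜 := ℝ) hf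

lemma integral_pi_prod {n : ℕ} (ν : Measure Ω) [IsProbabilityMeasure ν]
    (f : Fin n → Ω → ℝ) :
    ∫ x : Fin n → Ω, ∏ i, f i (x i) ∂(Measure.pi fun _ => ν) = ∏ i, ∫ y, f i y ∂ν := by
  letI : MeasureSpace Ω := ⟨ν⟩
  haveI : IsProbabilityMeasure (volume : Measure Ω) := ‹IsProbabilityMeasure ν›
  exact integral_fintype_prod_eq_prod f

end CVaux

set_option maxHeartbeats 1600000 in
/-- Asymptotic consistency of cross validation (Theorem 1, conditional form with deterministic
candidate sequences `q n i`, `1 ≤ i ≤ m n`): under conditions (i)–(v), the probability that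
`q n 1` attains strictly the largest likelihood among all candidates tends to 1. -/
theorem cv_consistency {Ω : Type*} [MeasurableSpace Ω]
    (μ : Measure Ω) [SigmaFinite μ] (p₀ : Ω → ℝ)
    (hp₀ : IsDensity μ p₀)
    (m : ℕ → ℕ) (hm : ∀ n, 2 ≤ m n)
    (q : ℕ → ℕ → Ω → ℝ)
    (hq : ∀ n, ∀ i ∈ Finset.Icc 1 (m n), IsDensity μ (q n i))
    (hq₁pos : ∀ n, ∀ᵐ x ∂μ, 0 < p₀ x → 0 < q n 1 x)
    (hVint : ∀ n, Integrable (fun x => p₀ x * (Real.log (p₀ x / q n 1 x)) ^ 2) μ)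
    (hVpos : ∀ n, 0 < klV μ p₀ (q n 1))
    (M c : ℝ) (hM : 0 < M) (hc0 : 0 < c) (hc1 : c < 1)
    (t : ℕ → ℝ) (ht : ∀ n, 0 < t n)
    -- (i) d_K(p₀, q_{n,1}) ≤ M v_{n,1}²
    (hdK : ∀ n, klD μ p₀ (q n 1) ≤ M * hellSq μ p₀ (q n 1))
    -- (ii) M v_{n,1}² + s_n t_n < c v_{n,i}² for all 2 ≤ i ≤ m_n
    (hsep : ∀ n, ∀ i ∈ Finset.Icc 2 (m n),
      M * hellSq μ p₀ (q n 1) + klV μ p₀ (q n 1) * t n < c * hellSq μ p₀ (q n i))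
    -- (iii) n t_n² s_n → ∞
    (hiii : Tendsto (fun n : ℕ => (n : ℝ) * t n ^ 2 * klV μ p₀ (q n 1)) atTop atTop)
    -- (iv) n · min_{2 ≤ i ≤ m_n} v_{n,i}² → ∞
    (hiv : Tendsto (fun n : ℕ => (n : ℝ) *
        (Finset.Icc 2 (m n)).inf' (Finset.nonempty_Icc.mpr (hm n))
          (fun i => hellSq μ p₀ (q n i))) atTop atTop)
    -- (v) log m_n = o( n · min_{2 ≤ i ≤ m_n} v_{n,i}² )
    (hv : (fun n : ℕ => Real.log (m n)) =o[atTop]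
        (fun n : ℕ => (n : ℝ) *
          (Finset.Icc 2 (m n)).inf' (Finset.nonempty_Icc.mpr (hm n))
            (fun i => hellSq μ p₀ (q n i))))
    (P₀ : Measure Ω) [IsProbabilityMeasure P₀]
    (hP₀ : P₀ = μ.withDensity fun x => ENNReal.ofReal (p₀ x)) :
    Tendsto (fun n : ℕ =>
        (Measure.pi fun _ : Fin n => P₀)
          {x : Fin n → Ω |
            ∀ i ∈ Finset.Icc 2 (m n),
              ∏ k : Fin n, q n i (x k) < ∏ k : Fin n, q n 1 (x k)})
      atTop (nhds 1) := by
  classical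
  obtain ⟨hp₀m, hp₀0, hp₀int, hp₀1⟩ := hp₀
  have hq1mem : ∀ n, (1 : ℕ) ∈ Finset.Icc 1 (m n) := fun n =>
    Finset.mem_Icc.mpr ⟨le_rfl, le_trans one_le_two (hm n)⟩
  have hqmem : ∀ n, ∀ i ∈ Finset.Icc 2 (m n), i ∈ Finset.Icc 1 (m n) := by
    intro n i hi
    rw [Finset.mem_Icc] at hi ⊢
    exact ⟨le_trans one_le_two hi.1, hi.2⟩
  set W : ℕ → ℝ := fun n => (n : ℝ) *
      (Finset.Icc 2 (m n)).inf' (Finset.nonempty_Icc.mpr (hm n))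
        (fun i => hellSq μ p₀ (q n i)) with hW
  -- the key quantitative bound, for each `n ≥ 1`
  have key : ∀ n : ℕ, 1 ≤ n → ((Measure.pi fun _ : Fin n => P₀)
      {x : Fin n → Ω | ∀ i ∈ Finset.Icc 2 (m n),
        ∏ k : Fin n, q n i (x k) < ∏ k : Fin n, q n 1 (x k)}ᶜ).toReal
      ≤ ((n : ℝ) * t n ^ 2 * klV μ p₀ (q n 1))⁻¹
        + (m n : ℝ) * Real.exp (-((1 - c) / 2) * W n) := by
    intro n hn
    have hnR : (0 : ℝ) < n := by exact_mod_cast hn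
    obtain ⟨hq1m, hq10, hq1int, hq11⟩ := hq n 1 (hq1mem n)
    set Pn : Measure (Fin n → Ω) := Measure.pi fun _ : Fin n => P₀ with hPn
    haveI : IsProbabilityMeasure Pn := by rw [hPn]; infer_instance
    set sn : ℝ := klV μ p₀ (q n 1) with hsn
    have hsn0 : 0 < sn := hVpos n
    set L : Ω → ℝ := fun y => Real.log (p₀ y / q n 1 y) with hLdef
    have hLm : Measurable L := Real.measurable_log.comp (hp₀m.div hq1m)
    have hL2P : Integrable (fun y => L y ^ 2) P₀ := by
      rw [hP₀, CVaux.integrable_wd hp₀m hp₀0]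
      simp only [hLdef]
      exact hVint n
    have hL1P : Integrable L P₀ := by
      refine Integrable.mono' ((integrable_const (1 : ℝ)).add hL2P)
        hLm.aestronglyMeasurable (Filter.Eventually.of_forall fun y => ?_)
      rw [Real.norm_eq_abs]
      simp only [Pi.add_apply]
      nlinarith [sq_nonneg (|L y| - 1), sq_abs (L y), abs_nonneg (L y)]
    set dk : ℝ := klD μ p₀ (q n 1) with hdkdef
    have hdk_eq : ∫ y, L y ∂P₀ = dk := by
      rw [hP₀, CVaux.integral_wd hp₀m hp₀0, hdkdef]
      simp only [hLdef]
      rfl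
    have hs_eq : ∫ y, L y ^ 2 ∂P₀ = sn := by
      rw [hP₀, CVaux.integral_wd hp₀m hp₀0, hsn]
      simp only [hLdef]
      rfl
    set Y : Ω → ℝ := fun y => L y - dk with hYdef
    have hY1 : Integrable Y P₀ := hL1P.sub (integrable_const dk)
    have hY1eq : ∫ y, Y y ∂P₀ = 0 := by
      simp only [hYdef]
      rw [integral_sub hL1P (integrable_const dk), hdk_eq, integral_const]
      simp
    have hYsq : (fun y => Y y ^ 2) = fun y => L y ^ 2 - 2 * dk * L y + dk ^ 2 := by
      funext y; simp only [hYdef]; ring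
    have hint_a : Integrable (fun y => L y ^ 2 - 2 * dk * L y) P₀ :=
      hL2P.sub (hL1P.const_mul (2 * dk))
    have hY2 : Integrable (fun y => Y y ^ 2) P₀ := by
      rw [hYsq]
      exact hint_a.add (integrable_const _)
    have hY2eq : ∫ y, Y y ^ 2 ∂P₀ ≤ sn := by
      rw [hYsq, integral_add hint_a (integrable_const _),
        integral_sub hL2P (hL1P.const_mul (2 * dk)), integral_const_mul, hdk_eq, hs_eq,
        integral_const]
      simp only [measure_univ, probReal_univ, ENNReal.toReal_one, smul_eq_mul, one_mul]
      nlinarith [sq_nonneg dk]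
    -- products of functions of coordinates
    set g : Fin n → Fin n → Fin n → Ω → ℝ := fun j k i y =>
      if i = j then (if j = k then Y y ^ 2 else Y y) else if i = k then Y y else 1 with hgdef
    have hgint : ∀ j k i, Integrable (g j k i) P₀ := by
      intro j k i
      simp only [hgdef]
      split_ifs
      · exact hY2
      · exact hY1
      · exact hY1
      · exact integrable_const 1
    have hgprod : ∀ (j k : Fin n) (x : Fin n → Ω),
        (∏ i, g j k i (x i)) = Y (x j) * Y (x k) := by
      intro j k x
      by_cases hjk : j = k
      · subst hjk
        rw [Finset.prod_eq_single j (fun i _ hij => by simp [hgdef, hij])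
          (fun hj => absurd (Finset.mem_univ j) hj)]
        simp [hgdef, sq]
      · have hone : ∏ i ∈ (Finset.univ.erase j).erase k, g j k i (x i) = 1 :=
          Finset.prod_eq_one fun i hi => by
            obtain ⟨hik, hij⟩ := Finset.mem_erase.mp hi
            have hij' := (Finset.mem_erase.mp hij).1
            simp [hgdef, hij', hik]
        rw [← Finset.mul_prod_erase Finset.univ _ (Finset.mem_univ j),
          ← Finset.mul_prod_erase _ _
            (Finset.mem_erase.mpr ⟨Ne.symm hjk, Finset.mem_univ k⟩),
          hone]
        simp [hgdef, hjk, Ne.symm hjk]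
    have he : (fun x : Fin n → Ω => (∑ k, Y (x k)) ^ 2)
        = fun x => ∑ j, ∑ k, ∏ i, g j k i (x i) := by
      funext x
      rw [sq, Finset.sum_mul_sum]
      exact Finset.sum_congr rfl fun j _ =>
        Finset.sum_congr rfl fun k _ => (hgprod j k x).symm
    have prodint : ∀ j k : Fin n,
        Integrable (fun x : Fin n → Ω => ∏ i, g j k i (x i)) Pn :=
      fun j k => CVaux.integrable_pi_prod P₀ _ fun i => hgint j k i
    have hFint : Integrable (fun x : Fin n → Ω => (∑ k, Y (x k)) ^ 2) Pn := by
      rw [he]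
      exact integrable_finset_sum _ fun j _ =>
        integrable_finset_sum _ fun k _ => prodint j k
    have hint2 : ∀ j k : Fin n, ∫ x, ∏ i, g j k i (x i) ∂Pn
        = if j = k then ∫ y, Y y ^ 2 ∂P₀ else 0 := by
      intro j k
      have hbase : ∫ x, ∏ i, g j k i (x i) ∂Pn = ∏ i, ∫ y, g j k i y ∂P₀ :=
        CVaux.integral_pi_prod P₀ fun i => g j k i
      rw [hbase]
      by_cases hjk : j = k
      · subst hjk
        rw [if_pos rfl]
        rw [Finset.prod_eq_single j ?_ (fun hj => absurd (Finset.mem_univ j) hj)]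
        · congr 1
          funext y
          simp [hgdef]
        · intro i _ hij
          have : (fun y => g j j i y) = fun _ : Ω => (1 : ℝ) := by
            funext y; simp [hgdef, hij]
          rw [this, integral_const]
          simp
      · rw [if_neg hjk]
        refine Finset.prod_eq_zero (Finset.mem_univ j) ?_
        have : (fun y => g j k j y) = Y := by
          funext y; simp [hgdef, hjk]
        rw [this, hY1eq]
    have hFeq : ∫ x, (∑ k, Y (x k)) ^ 2 ∂Pn = (n : ℝ) * ∫ y, Y y ^ 2 ∂P₀ := by
      rw [he, integral_finset_sum _ fun j _ =>
        integrable_finset_sum _ fun k _ => prodint j k]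
      have hrow : ∀ j : Fin n,
          ∫ x, ∑ k, ∏ i, g j k i (x i) ∂Pn = ∫ y, Y y ^ 2 ∂P₀ := by
        intro j
        rw [integral_finset_sum _ fun k _ => prodint j k]
        simp_rw [hint2]
        simp
      rw [Finset.sum_congr rfl fun j _ => hrow j, Finset.sum_const,
        Finset.card_univ, Fintype.card_fin, nsmul_eq_mul]
    -- Chebyshev bound
    set a : ℝ := M * hellSq μ p₀ (q n 1) + sn * t n with hadef
    set Bc : Set (Fin n → Ω) := {x | (n : ℝ) * a < ∑ k, L (x k)} with hBdef
    have hch : (Pn Bc).toReal ≤ ((n : ℝ) * t n ^ 2 * sn)⁻¹ := by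
      set ε1 : ℝ := ((n : ℝ) * sn * t n) ^ 2 with hε1def
      have hnst : 0 < (n : ℝ) * sn * t n := mul_pos (mul_pos hnR hsn0) (ht n)
      have hε1pos : 0 < ε1 := by rw [hε1def]; positivity
      have hdka : dk ≤ M * hellSq μ p₀ (q n 1) := by rw [hdkdef]; exact hdK n
      have hsub : Bc ⊆ {x : Fin n → Ω | ε1 ≤ (∑ k, Y (x k)) ^ 2} := by
        intro x hx
        simp only [hBdef, Set.mem_setOf_eq] at hx
        simp only [Set.mem_setOf_eq]
        have h1 : (∑ k, Y (x k)) = (∑ k, L (x k)) - (n : ℝ) * dk := by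
          simp only [hYdef]
          rw [Finset.sum_sub_distrib, Finset.sum_const, Finset.card_univ,
            Fintype.card_fin, nsmul_eq_mul]
        have h3 : (n : ℝ) * dk + (n : ℝ) * (sn * t n) ≤ (n : ℝ) * a := by
          rw [hadef]; nlinarith [hdka, hnR.le]
        have h2 : (n : ℝ) * sn * t n < ∑ k, Y (x k) := by
          rw [h1]; nlinarith [hx, h3]
        rw [hε1def]
        nlinarith [h2, hnst]
      have hmk := mul_meas_ge_le_integral_of_nonneg (μ := Pn)
        (f := fun x : Fin n → Ω => (∑ k, Y (x k)) ^ 2)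
        (Filter.Eventually.of_forall fun x => sq_nonneg _) hFint ε1
      rw [hFeq] at hmk
      have hmono : (Pn Bc).toReal
          ≤ (Pn {x : Fin n → Ω | ε1 ≤ (∑ k, Y (x k)) ^ 2}).toReal :=
        ENNReal.toReal_mono (measure_ne_top _ _) (measure_mono hsub)
      have h5 : (Pn {x : Fin n → Ω | ε1 ≤ (∑ k, Y (x k)) ^ 2}).toReal
          ≤ ((n : ℝ) * ∫ y, Y y ^ 2 ∂P₀) / ε1 := by
        rw [le_div_iff₀ hε1pos]
        simp only [measureReal_def] at hmk
        linarith [hmk]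
      refine hmono.trans (h5.trans ?_)
      have hstep : ((n : ℝ) * ∫ y, Y y ^ 2 ∂P₀) / ε1 ≤ ((n : ℝ) * sn) / ε1 :=
        (div_le_div_iff_of_pos_right hε1pos).mpr (mul_le_mul_of_nonneg_left hY2eq hnR.le)
      refine hstep.trans (le_of_eq ?_)
      have h1 : (n : ℝ) ≠ 0 := ne_of_gt hnR
      have h2 : sn ≠ 0 := ne_of_gt hsn0
      have h3 : t n ≠ 0 := ne_of_gt (ht n)
      rw [hε1def]
      field_simp
    -- Hellinger/Markov bounds for the alternatives
    set Cset : ℕ → Set (Fin n → Ω) := fun i =>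
      {x : Fin n → Ω | Real.exp (-((n : ℝ) * (c * hellSq μ p₀ (q n i))) / 2)
        ≤ ∏ k, Real.sqrt (q n i (x k)) / Real.sqrt (p₀ (x k))} with hCdef
    have hellpart : ∀ i ∈ Finset.Icc 2 (m n),
        (Pn (Cset i)).toReal ≤ Real.exp (-((1 - c) / 2) * W n) := by
      intro i hi
      obtain ⟨hqim, hqi0, hqii, hqi1⟩ := hq n i (hqmem n i hi)
      set v : ℝ := hellSq μ p₀ (q n i) with hvdef
      have hv0 : 0 ≤ v := by
        rw [hvdef, hellSq]
        exact integral_nonneg fun x => sq_nonneg _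
      set h : Ω → ℝ := fun y => Real.sqrt (q n i y) / Real.sqrt (p₀ y) with hhdef
      have hph : (fun y => p₀ y * h y) = fun y => Real.sqrt (p₀ y * q n i y) := by
        funext y
        simp only [hhdef]
        rw [Real.sqrt_mul (hp₀0 y),
          show p₀ y * (Real.sqrt (q n i y) / Real.sqrt (p₀ y))
            = p₀ y / Real.sqrt (p₀ y) * Real.sqrt (q n i y) by ring,
          Real.div_sqrt]
      have hIdp : IsDensity μ p₀ := ⟨hp₀m, hp₀0, hp₀int, hp₀1⟩
      have hIdq : IsDensity μ (q n i) := ⟨hqim, hqi0, hqii, hqi1⟩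
      have hhint : Integrable h P₀ := by
        rw [hP₀, CVaux.integrable_wd hp₀m hp₀0, hph]
        exact CVaux.sqrt_mul_integrable hIdp hIdq
      have hhnn : ∀ y, 0 ≤ h y := fun y => by
        simp only [hhdef]; positivity
      have hheq : ∫ y, h y ∂P₀ = 1 - v / 2 := by
        rw [hP₀, CVaux.integral_wd hp₀m hp₀0]
        calc ∫ x, p₀ x * h x ∂μ = ∫ x, Real.sqrt (p₀ x * q n i x) ∂μ := by rw [hph]
          _ = 1 - v / 2 := by rw [CVaux.integral_sqrt_mul hIdp hIdq, hvdef]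
      have hint01 : (0 : ℝ) ≤ 1 - v / 2 := hheq ▸ integral_nonneg fun y => hhnn y
      have hHint : Integrable (fun x : Fin n → Ω => ∏ k, h (x k)) Pn :=
        CVaux.integrable_pi_prod P₀ _ fun _ => hhint
      have hHeq : ∫ x, ∏ k, h (x k) ∂Pn = (1 - v / 2) ^ n := by
        have hb : ∫ x : Fin n → Ω, ∏ k, h (x k) ∂Pn = ∏ _k : Fin n, ∫ y, h y ∂P₀ :=
          CVaux.integral_pi_prod P₀ fun _ => h
        rw [hb, hheq, Finset.prod_const, Finset.card_univ, Fintype.card_fin]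
      have hεpos : 0 < Real.exp (-((n : ℝ) * (c * v)) / 2) := Real.exp_pos _
      have hmk := mul_meas_ge_le_integral_of_nonneg (μ := Pn)
        (f := fun x : Fin n → Ω => ∏ k, h (x k))
        (Filter.Eventually.of_forall fun x => Finset.prod_nonneg fun k _ => hhnn _)
        hHint (Real.exp (-((n : ℝ) * (c * v)) / 2))
      rw [hHeq] at hmk
      have hCeq : Cset i = {x : Fin n → Ω |
          Real.exp (-((n : ℝ) * (c * v)) / 2) ≤ ∏ k, h (x k)} := by
        simp only [hCdef, hhdef, hvdef]
      have h1 : (Pn (Cset i)).toReal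
          ≤ (1 - v / 2) ^ n / Real.exp (-((n : ℝ) * (c * v)) / 2) := by
        rw [hCeq, le_div_iff₀ hεpos]
        simp only [measureReal_def] at hmk
        linarith [hmk]
      have h3 : (1 - v / 2) ^ n ≤ Real.exp (-((n : ℝ) * v) / 2) := by
        calc (1 - v / 2) ^ n ≤ Real.exp (-(v / 2)) ^ n :=
              pow_le_pow_left₀ hint01 (by linarith [Real.add_one_le_exp (-(v / 2))]) n
          _ = Real.exp (-((n : ℝ) * v) / 2) := by
              rw [← Real.exp_nat_mul]; congr 1; ring
      have h4 : (Pn (Cset i)).toReal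
          ≤ Real.exp (-((1 - c) / 2) * ((n : ℝ) * v)) := by
        refine h1.trans ?_
        rw [div_le_iff₀ hεpos, ← Real.exp_add]
        refine h3.trans (le_of_eq ?_)
        congr 1; ring
      refine h4.trans (Real.exp_le_exp.mpr ?_)
      have hWle : W n ≤ (n : ℝ) * v := by
        simp only [hW]
        refine mul_le_mul_of_nonneg_left ?_ hnR.le
        rw [hvdef]
        exact Finset.inf'_le _ hi
      nlinarith [hWle, hc1.le]
    -- almost sure positivity
    have hA0 : P₀ {y : Ω | ¬ (0 < p₀ y ∧ 0 < q n 1 y)} = 0 := by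
      have h1 : ∀ᵐ y ∂P₀, 0 < p₀ y := by
        rw [hP₀, ae_iff]
        have hseteq : {y : Ω | ¬ 0 < p₀ y} = p₀ ⁻¹' Set.Iic 0 := by
          ext y; simp [not_lt]
        have hms : MeasurableSet {y : Ω | ¬ 0 < p₀ y} := by
          rw [hseteq]; exact hp₀m measurableSet_Iic
        rw [withDensity_apply _ hms]
        have hz : ∀ᵐ y ∂(μ.restrict {y : Ω | ¬ 0 < p₀ y}),
            ENNReal.ofReal (p₀ y) = 0 := by
          filter_upwards [ae_restrict_mem hms] with y hy
          simp only [Set.mem_setOf_eq, not_lt] at hy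
          simp [ENNReal.ofReal_eq_zero.mpr hy]
        rw [lintegral_congr_ae hz, lintegral_zero]
      have h2 : ∀ᵐ y ∂P₀, 0 < p₀ y → 0 < q n 1 y := by
        rw [hP₀]
        exact Filter.Eventually.filter_mono
          (Measure.AbsolutelyContinuous.ae_le (withDensity_absolutelyContinuous μ _))
          (hq₁pos n)
      have h3 : ∀ᵐ y ∂P₀, 0 < p₀ y ∧ 0 < q n 1 y := by
        filter_upwards [h1, h2] with y hy1 hy2
        exact ⟨hy1, hy2 hy1⟩
      exact ae_iff.mp h3
    have hG0 : Pn {x : Fin n → Ω | ¬ ∀ k, 0 < p₀ (x k) ∧ 0 < q n 1 (x k)} = 0 := by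
      have hsub2 : {x : Fin n → Ω | ¬ ∀ k, 0 < p₀ (x k) ∧ 0 < q n 1 (x k)}
          ⊆ ⋃ k : Fin n, (fun x : Fin n → Ω => x k) ⁻¹'
            {y : Ω | ¬ (0 < p₀ y ∧ 0 < q n 1 y)} := by
        intro x hx
        simp only [Set.mem_setOf_eq, not_forall] at hx
        obtain ⟨k, hk⟩ := hx
        exact Set.mem_iUnion.mpr ⟨k, hk⟩
      refine measure_mono_null hsub2 (measure_iUnion_null fun k => ?_)
      rw [hPn]
      exact Measure.pi_eval_preimage_null (μ := fun _ : Fin n => P₀) (i := k) hA0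
    -- inclusion of the bad event
    set Es : Set (Fin n → Ω) := {x : Fin n → Ω | ∀ i ∈ Finset.Icc 2 (m n),
      ∏ k : Fin n, q n i (x k) < ∏ k : Fin n, q n 1 (x k)} with hEsdef
    have hincl : Esᶜ ⊆ ({x : Fin n → Ω | ¬ ∀ k, 0 < p₀ (x k) ∧ 0 < q n 1 (x k)} ∪
        (Bc ∪ ⋃ i ∈ Finset.Icc 2 (m n), Cset i)) := by
      intro x hx
      by_cases hGx : ∀ k, 0 < p₀ (x k) ∧ 0 < q n 1 (x k)
      swap
      · exact Or.inl hGx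
      by_cases hBx : (n : ℝ) * a < ∑ k, L (x k)
      · refine Or.inr (Or.inl ?_)
        simp only [hBdef, Set.mem_setOf_eq]
        exact hBx
      right; right
      rw [Set.mem_compl_iff] at hx
      simp only [hEsdef, Set.mem_setOf_eq, not_forall, not_lt, exists_prop] at hx
      obtain ⟨i, hi, hle⟩ := hx
      rw [not_lt] at hBx
      refine Set.mem_biUnion hi ?_
      simp only [hCdef, Set.mem_setOf_eq]
      obtain ⟨hqim, hqi0, -, -⟩ := hq n i (hqmem n i hi)
      have hp_pos : 0 < ∏ k, p₀ (x k) := Finset.prod_pos fun k _ => (hGx k).1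
      have hq1_pos : 0 < ∏ k, q n 1 (x k) := Finset.prod_pos fun k _ => (hGx k).2
      have hsum : ∑ k, L (x k)
          = Real.log ((∏ k, p₀ (x k)) / ∏ k, q n 1 (x k)) := by
        simp only [hLdef]
        rw [← Finset.prod_div_distrib, Real.log_prod
          (fun k _ => ne_of_gt (div_pos (hGx k).1 (hGx k).2))]
      have hBx' : (∏ k, p₀ (x k)) / ∏ k, q n 1 (x k)
          ≤ Real.exp ((n : ℝ) * a) := by
        rw [hsum] at hBx
        exact (Real.log_le_iff_le_exp (div_pos hp_pos hq1_pos)).mp hBx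
      have hq1low : Real.exp (-((n : ℝ) * a)) * ∏ k, p₀ (x k)
          ≤ ∏ k, q n 1 (x k) := by
        rw [div_le_iff₀ hq1_pos] at hBx'
        rw [Real.exp_neg, inv_mul_le_iff₀ (Real.exp_pos _)]
        linarith [hBx']
      have hacv : a ≤ c * hellSq μ p₀ (q n i) := by
        rw [hadef, hsn]
        exact (hsep n i hi).le
      have hqilow : Real.exp (-((n : ℝ) * (c * hellSq μ p₀ (q n i)))) * ∏ k, p₀ (x k)
          ≤ ∏ k, q n i (x k) := by
        refine le_trans (le_trans ?_ hq1low) hle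
        refine mul_le_mul_of_nonneg_right (Real.exp_le_exp.mpr ?_) hp_pos.le
        nlinarith [hacv, hnR.le]
      have hprodeq : (∏ k, Real.sqrt (q n i (x k)) / Real.sqrt (p₀ (x k)))
          = Real.sqrt (∏ k, q n i (x k)) / Real.sqrt (∏ k, p₀ (x k)) := by
        rw [Finset.prod_div_distrib,
          ← CVaux.sqrt_finset_prod _ _ (fun k _ => hqi0 (x k)),
          ← CVaux.sqrt_finset_prod _ _ (fun k _ => hp₀0 (x k))]
      rw [hprodeq, le_div_iff₀ (Real.sqrt_pos.mpr hp_pos)]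
      calc Real.exp (-((n : ℝ) * (c * hellSq μ p₀ (q n i))) / 2)
            * Real.sqrt (∏ k, p₀ (x k))
          = Real.sqrt (Real.exp (-((n : ℝ) * (c * hellSq μ p₀ (q n i))))
            * ∏ k, p₀ (x k)) := by
            rw [Real.sqrt_mul (Real.exp_pos _).le, CVaux.sqrt_exp]
        _ ≤ Real.sqrt (∏ k, q n i (x k)) := Real.sqrt_le_sqrt hqilow
    -- assembling the bound
    have hsplit : Pn Esᶜ ≤ Pn Bc + Pn (⋃ i ∈ Finset.Icc 2 (m n), Cset i) := by
      calc Pn Esᶜ ≤ Pn ({x : Fin n → Ω | ¬ ∀ k, 0 < p₀ (x k) ∧ 0 < q n 1 (x k)} ∪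
            (Bc ∪ ⋃ i ∈ Finset.Icc 2 (m n), Cset i)) := measure_mono hincl
        _ ≤ Pn {x : Fin n → Ω | ¬ ∀ k, 0 < p₀ (x k) ∧ 0 < q n 1 (x k)}
            + Pn (Bc ∪ ⋃ i ∈ Finset.Icc 2 (m n), Cset i) := measure_union_le _ _
        _ = Pn (Bc ∪ ⋃ i ∈ Finset.Icc 2 (m n), Cset i) := by rw [hG0, zero_add]
        _ ≤ Pn Bc + Pn (⋃ i ∈ Finset.Icc 2 (m n), Cset i) := measure_union_le _ _
    have hsplit' := ENNReal.toReal_mono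
      (ENNReal.add_ne_top.mpr ⟨measure_ne_top _ _, measure_ne_top _ _⟩) hsplit
    rw [ENNReal.toReal_add (measure_ne_top _ _) (measure_ne_top _ _)] at hsplit'
    refine hsplit'.trans (add_le_add hch ?_)
    have hsum_le : (Pn (⋃ i ∈ Finset.Icc 2 (m n), Cset i)).toReal
        ≤ ∑ i ∈ Finset.Icc 2 (m n), (Pn (Cset i)).toReal := by
      refine le_trans (ENNReal.toReal_mono ?_ (measure_biUnion_finset_le _ _)) ?_
      · exact ENNReal.sum_ne_top.mpr fun i _ => measure_ne_top _ _
      · rw [ENNReal.toReal_sum fun i _ => measure_ne_top _ _]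
    refine hsum_le.trans ?_
    refine le_trans (Finset.sum_le_sum hellpart) ?_
    rw [Finset.sum_const, nsmul_eq_mul]
    refine mul_le_mul_of_nonneg_right ?_ (Real.exp_nonneg _)
    rw [Nat.card_Icc]
    have hcard : m n + 1 - 2 ≤ m n := by omega
    exact_mod_cast hcard
  -- pass to the limit
  have hb1 : Tendsto (fun n : ℕ => ((n : ℝ) * t n ^ 2 * klV μ p₀ (q n 1))⁻¹)
      atTop (nhds 0) := hiii.inv_tendsto_atTop
  have hb2 : Tendsto (fun n : ℕ => (m n : ℝ) * Real.exp (-((1 - c) / 2) * W n))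
      atTop (nhds 0) := by
    have hWtop : Tendsto W atTop atTop := hiv
    have hvW : (fun n : ℕ => Real.log (m n)) =o[atTop] W := hv
    have hexp : Tendsto (fun n => Real.log (m n) + -((1 - c) / 2) * W n) atTop atBot := by
      refine tendsto_atBot_mono' atTop
        (f₁ := fun n => -((1 - c) / 4) * W n) ?_ ?_
      · filter_upwards [hvW.def (by linarith : (0 : ℝ) < (1 - c) / 4),
          hWtop.eventually_ge_atTop 0] with n hn1 hn2
        have hlog : Real.log (m n) ≤ (1 - c) / 4 * W n := by
          have := le_trans (le_abs_self _) ((Real.norm_eq_abs _) ▸ hn1)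
          rwa [Real.norm_eq_abs, abs_of_nonneg hn2] at this
        linarith
      · exact Tendsto.const_mul_atTop_of_neg (by linarith) hWtop
    have hz := Real.tendsto_exp_atBot.comp hexp
    refine hz.congr fun n => ?_
    simp only [Function.comp_apply]
    rw [Real.exp_add, Real.exp_log
      (by exact_mod_cast lt_of_lt_of_le two_pos (hm n) : (0 : ℝ) < (m n : ℝ))]
  have h0 : Tendsto (fun n : ℕ => ((Measure.pi fun _ : Fin n => P₀)
      {x : Fin n → Ω | ∀ i ∈ Finset.Icc 2 (m n),
        ∏ k : Fin n, q n i (x k) < ∏ k : Fin n, q n 1 (x k)}ᶜ).toReal)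
      atTop (nhds 0) := by
    refine squeeze_zero' (Filter.Eventually.of_forall fun n => ENNReal.toReal_nonneg)
      ((eventually_ge_atTop 1).mono fun n hn => key n hn) ?_
    simpa using hb1.add hb2
  have hEmeas : ∀ n : ℕ, MeasurableSet {x : Fin n → Ω | ∀ i ∈ Finset.Icc 2 (m n),
      ∏ k : Fin n, q n i (x k) < ∏ k : Fin n, q n 1 (x k)} := by
    intro n
    have hrw : {x : Fin n → Ω | ∀ i ∈ Finset.Icc 2 (m n),
        ∏ k : Fin n, q n i (x k) < ∏ k : Fin n, q n 1 (x k)}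
        = ⋂ i ∈ Finset.Icc 2 (m n), {x : Fin n → Ω |
          ∏ k : Fin n, q n i (x k) < ∏ k : Fin n, q n 1 (x k)} := by
      ext x; simp
    rw [hrw]
    refine Finset.measurableSet_biInter _ fun i hi => measurableSet_lt ?_ ?_
    · exact Finset.measurable_prod _ fun k _ =>
        ((hq n i (hqmem n i hi)).1.comp (measurable_pi_apply k))
    · exact Finset.measurable_prod _ fun k _ =>
        ((hq n 1 (hq1mem n)).1.comp (measurable_pi_apply k))
  have h0' : Tendsto (fun n : ℕ => (Measure.pi fun _ : Fin n => P₀)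
      {x : Fin n → Ω | ∀ i ∈ Finset.Icc 2 (m n),
        ∏ k : Fin n, q n i (x k) < ∏ k : Fin n, q n 1 (x k)}ᶜ)
      atTop (nhds 0) := by
    have h1 := ENNReal.tendsto_ofReal h0
    rw [ENNReal.ofReal_zero] at h1
    exact h1.congr fun n => ENNReal.ofReal_toReal (measure_ne_top _ _)
  have hfinal := ((ENNReal.continuous_sub_left
    (by norm_num : (1 : ENNReal) ≠ ⊤)).tendsto 0).comp h0'
  rw [tsub_zero] at hfinal
  refine hfinal.congr fun n => ?_
  simp only [Function.comp_apply]
  rw [← prob_compl_eq_one_sub (hEmeas n).compl, compl_compl]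
end

section
/- Two-procedure consistency (deterministic-sequence form of Corollary 7). Let p₀ be a probability density on a σ-finite measure space (Ω, μ), and for each n let q_{n,1} and q_{n,2} be probability densities with q_{n,1} > 0 almost everywhere on {p₀ > 0}. Write v_{n,j} = d_H(p₀, q_{n,j}) and s_n = V(p₀, q_{n,1}). Assume there exist constants M > 0 and C > 0 and a sequence ε_n → 0 such that for all n: (i) 0 < s_n < ∞; (ii) d_K(p₀, q_{n,1}) ≤ M v_{n,1}²; (iii) s_n ≤ C d_K(p₀, q_{n,1}) (i.e., V(p₀, q_{n,1}) = O(d_K(p₀, q_{n,1}))); (iv) v_{n,1} ≤ ε_n v_{n,2} (the first procedure is asymptotically better); and (v) n v_{n,2}² → ∞. Let X₁, …, Xₙ be i.i.d. with law P₀ = μ.withDensity p₀. Then P₀^n( ∏_{k=1}^n q_{n,1}(X_k) > ∏_{k=1}^n q_{n,2}(X_k) ) → 1 as n → ∞; that is, cross validation selects the asymptotically better procedure with probability tending to 1. -/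
open MeasureTheory Real Filter
open scoped NNReal ENNReal

section aux
variable {α : Type*} [MeasurableSpace α]

lemma aux_map_eval {ι : Type*} [Fintype ι] [DecidableEq ι] (P : Measure α)
    [IsProbabilityMeasure P] (i : ι) :
    MeasurePreserving (Function.eval i) (Measure.pi fun _ : ι => P) P := by
  refine ⟨measurable_pi_apply i, ?_⟩
  ext s hs
  rw [Measure.map_apply (measurable_pi_apply i) hs, ← Set.univ_pi_update_univ, Measure.pi_pi]
  rw [← Finset.prod_subset (Finset.subset_univ {i}) (fun x _ hx => by
    rw [Function.update_of_ne (by simpa using hx), measure_univ]),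
    Finset.prod_singleton, Function.update_self]

lemma aux_indep_eval {ι : Type*} [Fintype ι] [DecidableEq ι] (P : Measure α)
    [IsProbabilityMeasure P] {i j : ι} (hij : i ≠ j) :
    ProbabilityTheory.IndepFun (Function.eval i) (Function.eval j)
      (Measure.pi fun _ : ι => P) := by
  rw [ProbabilityTheory.indepFun_iff_measure_inter_preimage_eq_mul]
  intro s t hs ht
  have h1 : Measure.pi (fun _ : ι => P) (Function.eval i ⁻¹' s) = P s := by
    rw [← Measure.map_apply (measurable_pi_apply i) hs, (aux_map_eval P i).map_eq]
  have h2 : Measure.pi (fun _ : ι => P) (Function.eval j ⁻¹' t) = P t := by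
    rw [← Measure.map_apply (measurable_pi_apply j) ht, (aux_map_eval P j).map_eq]
  rw [h1, h2, ← Set.univ_pi_update_univ, ← Set.univ_pi_update_univ, ← Set.pi_inter_distrib,
    Measure.pi_pi]
  rw [← Finset.prod_subset (Finset.subset_univ {i, j}) (fun x _ hx => by
    simp only [Finset.mem_insert, Finset.mem_singleton, not_or] at hx
    rw [Function.update_of_ne hx.1, Function.update_of_ne hx.2, Set.univ_inter, measure_univ]),
    Finset.prod_pair hij, Function.update_self, Function.update_of_ne hij.symm,
    Function.update_self, Function.update_of_ne hij, Set.inter_univ, Set.univ_inter]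
end aux

section wd
variable {Ω : Type*} [MeasurableSpace Ω] {μ : Measure Ω}

lemma integral_wd {p : Ω → ℝ} (hp : Measurable p) (hp0 : ∀ x, 0 ≤ p x) (g : Ω → ℝ) :
    ∫ x, g x ∂(μ.withDensity fun x => ENNReal.ofReal (p x)) = ∫ x, p x * g x ∂μ := by
  have h : (fun x => ENNReal.ofReal (p x)) = fun x => ((Real.toNNReal (p x) : ℝ≥0) : ℝ≥0∞) := rfl
  rw [h, integral_withDensity_eq_integral_smul hp.real_toNNReal]
  congr 1; funext x
  simp [NNReal.smul_def, Real.coe_toNNReal _ (hp0 x)]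

lemma integrable_wd {p : Ω → ℝ} (hp : Measurable p) (hp0 : ∀ x, 0 ≤ p x) (g : Ω → ℝ) :
    Integrable g (μ.withDensity fun x => ENNReal.ofReal (p x)) ↔
      Integrable (fun x => p x * g x) μ := by
  have h : (fun x => ENNReal.ofReal (p x)) = fun x => ((Real.toNNReal (p x) : ℝ≥0) : ℝ≥0∞) := rfl
  rw [h, integrable_withDensity_iff_integrable_smul hp.real_toNNReal]
  have h2 : (fun x => Real.toNNReal (p x) • g x) = fun x => p x * g x := by
    funext x; simp [NNReal.smul_def, Real.coe_toNNReal _ (hp0 x)]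
  rw [h2]
end wd

/-- Two-procedure consistency (deterministic-sequence form of Corollary 7): if procedure 1 is
asymptotically better than procedure 2 (in Hellinger distance) and `n v_{n,2}² → ∞`, then cross
validation selects procedure 1 with probability tending to 1. -/
theorem cv_two_procedure_consistency {Ω : Type*} [MeasurableSpace Ω]
    (μ : Measure Ω) [SigmaFinite μ] (p₀ : Ω → ℝ)
    (hp₀ : IsDensity μ p₀)
    (q₁ q₂ : ℕ → Ω → ℝ)
    (hq₁ : ∀ n, IsDensity μ (q₁ n)) (hq₂ : ∀ n, IsDensity μ (q₂ n))
    (hq₁pos : ∀ n, ∀ᵐ x ∂μ, 0 < p₀ x → 0 < q₁ n x)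
    (hVint : ∀ n, Integrable (fun x => p₀ x * (Real.log (p₀ x / q₁ n x)) ^ 2) μ)
    (M C : ℝ) (hM : 0 < M) (hC : 0 < C)
    (ε : ℕ → ℝ) (hε : Tendsto ε atTop (nhds 0))
    -- (i) 0 < s_n < ∞ (finiteness is the integrability hypothesis `hVint`)
    (hi : ∀ n, 0 < klV μ p₀ (q₁ n))
    -- (ii) d_K(p₀, q_{n,1}) ≤ M v_{n,1}²
    (hii : ∀ n, klD μ p₀ (q₁ n) ≤ M * hellDist μ p₀ (q₁ n) ^ 2)
    -- (iii) s_n ≤ C d_K(p₀, q_{n,1})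
    (hiii : ∀ n, klV μ p₀ (q₁ n) ≤ C * klD μ p₀ (q₁ n))
    -- (iv) v_{n,1} ≤ ε_n v_{n,2}
    (hiv : ∀ n, hellDist μ p₀ (q₁ n) ≤ ε n * hellDist μ p₀ (q₂ n))
    -- (v) n v_{n,2}² → ∞
    (hv : Tendsto (fun n : ℕ => (n : ℝ) * hellDist μ p₀ (q₂ n) ^ 2) atTop atTop)
    (P₀ : Measure Ω) [IsProbabilityMeasure P₀]
    (hP₀ : P₀ = μ.withDensity fun x => ENNReal.ofReal (p₀ x)) :
    Tendsto (fun n : ℕ =>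
        (Measure.pi fun _ : Fin n => P₀)
          {x : Fin n → Ω | ∏ k : Fin n, q₂ n (x k) < ∏ k : Fin n, q₁ n (x k)})
      atTop (nhds 1) := by
  classical
  obtain ⟨hp₀m, hp₀0, hp₀i, hp₀1⟩ := hp₀
  set t : ℕ → ℝ := fun n => (n : ℝ) * hellSq μ p₀ (q₂ n) with ht
  have h2nn : ∀ n, 0 ≤ hellSq μ p₀ (q₂ n) := fun n => integral_nonneg fun x => sq_nonneg _
  have hdist2 : ∀ n, hellDist μ p₀ (q₂ n) ^ 2 = hellSq μ p₀ (q₂ n) := fun n =>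
    Real.sq_sqrt (h2nn n)
  have hv' : Tendsto t atTop atTop := by
    have : (fun n : ℕ => (n : ℝ) * hellDist μ p₀ (q₂ n) ^ 2) = t := by
      funext n; rw [hdist2]
    rwa [this] at hv
  set G : (n : ℕ) → Set (Fin n → Ω) := fun n =>
    {x : Fin n → Ω | ∏ k : Fin n, q₂ n (x k) < ∏ k : Fin n, q₁ n (x k)} with hG

  letI : MeasureSpace Ω := ⟨P₀⟩
  have hvol : (volume : Measure Ω) = P₀ := rfl
  haveI hsf : SigmaFinite (volume : Measure Ω) := by rw [hvol]; infer_instance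
  have hInt : ∀ g : Ω → ℝ, ∫ x, g x ∂P₀ = ∫ x, p₀ x * g x ∂μ := fun g => by
    rw [hP₀]; exact integral_wd hp₀m hp₀0 g
  have hIntb : ∀ g : Ω → ℝ, Integrable g P₀ ↔ Integrable (fun x => p₀ x * g x) μ := fun g => by
    rw [hP₀]; exact integrable_wd hp₀m hp₀0 g
  have hpos : ∀ n, ∀ᵐ x ∂P₀, 0 < p₀ x ∧ 0 < q₁ n x := by
    intro n
    have h1 : ∀ᵐ x ∂P₀, 0 < p₀ x := by
      rw [hP₀, ae_iff]
      have hms : MeasurableSet {x | ¬ 0 < p₀ x} := (measurableSet_lt measurable_const hp₀m).compl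
      rw [withDensity_apply _ hms]
      have h0 : ∫⁻ x in {x | ¬ 0 < p₀ x}, ENNReal.ofReal (p₀ x) ∂μ
          = ∫⁻ x in {x | ¬ 0 < p₀ x}, 0 ∂μ :=
        setLIntegral_congr_fun hms (fun x hx =>
          ENNReal.ofReal_eq_zero.2 (not_lt.1 hx))
      rw [h0, lintegral_zero]
    have hac : P₀ ≪ μ := by rw [hP₀]; exact withDensity_absolutelyContinuous μ _
    have h2 : ∀ᵐ x ∂P₀, (0 < p₀ x → 0 < q₁ n x) := (hq₁pos n).filter_mono hac.ae_le
    filter_upwards [h1, h2] with x hx1 hx2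
    exact ⟨hx1, hx2 hx1⟩
  have key : ∀ n : ℕ, 1 ≤ t n → M * ε n ^ 2 ≤ 1/4 →
      (Measure.pi fun _ : Fin n => P₀) (G n)ᶜ ≤
        ENNReal.ofReal (16*C*M*ε n ^ 2) + ENNReal.ofReal (Real.exp (-(t n / 4))) := by
    intro n hn1 hn2
    obtain ⟨hq1m, hq10, hq1i, hq1I⟩ := hq₁ n
    obtain ⟨hq2m, hq20, hq2i, hq2I⟩ := hq₂ n
    set ν : Measure (Fin n → Ω) := Measure.pi fun _ : Fin n => P₀ with hν
    haveI : IsProbabilityMeasure ν := by rw [hν]; infer_instance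
    have hvolpi : ν = (volume : Measure (Fin n → Ω)) := by
      rw [MeasureTheory.volume_pi, hν]
      exact congrArg Measure.pi (funext fun _ => hvol.symm)
    have htpos : (0:ℝ) < t n := lt_of_lt_of_le one_pos hn1
    -- the log-likelihood function for procedure 1
    set Y : Ω → ℝ := fun ω => Real.log (p₀ ω / q₁ n ω) with hY
    have hYm : Measurable Y := (hp₀m.div hq1m).log
    have hEY : ∫ ω, Y ω ∂P₀ = klD μ p₀ (q₁ n) := hInt Y
    have hEY2 : ∫ ω, Y ω ^ 2 ∂P₀ = klV μ p₀ (q₁ n) := hInt (fun ω => Y ω ^ 2)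
    have hY2int : Integrable (fun ω => Y ω ^ 2) P₀ := (hIntb _).2 (hVint n)
    have hYmem : MemLp Y 2 P₀ := (memLp_two_iff_integrable_sq hYm.aestronglyMeasurable).2 hY2int
    -- the Hellinger-affinity function for procedure 2
    set g₂ : Ω → ℝ := fun ω => Real.sqrt (q₂ n ω / p₀ ω) with hg₂
    have hg2m : Measurable g₂ := (hq2m.div hp₀m).sqrt
    have hpt : ∀ x, p₀ x * g₂ x = Real.sqrt (p₀ x * q₂ n x) := by
      intro x
      rcases eq_or_lt_of_le (hp₀0 x) with h | h
      · simp [hg₂, ← h]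
      · have h3 : Real.sqrt (p₀ x) ≠ 0 := (Real.sqrt_pos.2 h).ne'
        rw [show g₂ x = Real.sqrt (q₂ n x) / Real.sqrt (p₀ x) from Real.sqrt_div (hq20 x) _,
          Real.sqrt_mul (hp₀0 x)]
        field_simp
        linear_combination (-Real.sqrt (q₂ n x)) * Real.mul_self_sqrt (hp₀0 x)
    have hsumint : Integrable (fun x => (p₀ x + q₂ n x) / 2) μ := (hp₀i.add hq2i).div_const 2
    have hρint : Integrable (fun x => Real.sqrt (p₀ x * q₂ n x)) μ := by
      refine Integrable.mono' hsumint
        ((hp₀m.mul hq2m).sqrt.aestronglyMeasurable) (ae_of_all μ fun x => ?_)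
      rw [Real.norm_eq_abs, abs_of_nonneg (Real.sqrt_nonneg _), Real.sqrt_mul (hp₀0 x)]
      have e1 := Real.sq_sqrt (hp₀0 x)
      have e2 := Real.sq_sqrt (hq20 x)
      nlinarith [sq_nonneg (Real.sqrt (p₀ x) - Real.sqrt (q₂ n x))]
    set ρ : ℝ := ∫ x, Real.sqrt (p₀ x * q₂ n x) ∂μ with hρ
    have hg2int : Integrable g₂ P₀ := by
      refine (hIntb g₂).2 ?_
      rw [show (fun x => p₀ x * g₂ x) = fun x => Real.sqrt (p₀ x * q₂ n x) from funext hpt]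
      exact hρint
    have hEg2 : ∫ ω, g₂ ω ∂P₀ = ρ := by
      rw [hInt g₂, show (fun x => p₀ x * g₂ x) = fun x => Real.sqrt (p₀ x * q₂ n x) from
        funext hpt]
    have hρ0 : (0:ℝ) ≤ ρ := integral_nonneg fun x => Real.sqrt_nonneg _
    have hρeq : ρ = 1 - hellSq μ p₀ (q₂ n) / 2 := by
      have hptw : (fun x => (Real.sqrt (p₀ x) - Real.sqrt (q₂ n x)) ^ 2)
          = fun x => (p₀ x + q₂ n x) - 2 * Real.sqrt (p₀ x * q₂ n x) := by
        funext x
        rw [sub_sq, Real.sq_sqrt (hp₀0 x), Real.sq_sqrt (hq20 x), Real.sqrt_mul (hp₀0 x)]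
        ring
      have hintegr1 : Integrable (fun x => p₀ x + q₂ n x) μ := hp₀i.add hq2i
      have hintegr2 : Integrable (fun x => 2 * Real.sqrt (p₀ x * q₂ n x)) μ :=
        hρint.const_mul 2
      have hint : hellSq μ p₀ (q₂ n) = 2 - 2 * ρ := by
        show (∫ x, (Real.sqrt (p₀ x) - Real.sqrt (q₂ n x)) ^ 2 ∂μ) = 2 - 2 * ρ
        rw [hptw, integral_sub hintegr1 hintegr2, integral_add hp₀i hq2i,
          integral_const_mul, hp₀1, hq2I, ← hρ]
        ring
      rw [hint]; ring
    have hρle : ρ ≤ Real.exp (-(hellSq μ p₀ (q₂ n) / 2)) := by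
      rw [hρeq]
      linarith [Real.add_one_le_exp (-(hellSq μ p₀ (q₂ n) / 2))]
    -- product statistics
    set W : (Fin n → Ω) → ℝ := fun x => ∏ k : Fin n, g₂ (x k) with hW
    have hW0 : ∀ x, 0 ≤ W x := fun x => Finset.prod_nonneg fun k _ => Real.sqrt_nonneg _
    have hWint : Integrable W ν := by
      rw [hvolpi]
      exact Integrable.fintype_prod (f := fun _ : Fin n => g₂)
        (fun k => by rw [show (volume : Measure Ω) = P₀ from rfl]; exact hg2int)
    have hEW : ∫ x, W x ∂ν = ρ ^ n := by
      rw [hvolpi]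
      calc ∫ x, W x = (∫ x, g₂ x ∂(volume : Measure Ω)) ^ Fintype.card (Fin n) :=
            integral_fintype_prod_eq_pow (ι := Fin n) g₂
        _ = ρ ^ n := by rw [hvol, hEg2, Fintype.card_fin]
    set X : (Fin n → Ω) → ℝ := fun x => ∑ k : Fin n, Y (x k) with hX
    have hmemk : ∀ k : Fin n, MemLp (fun x : Fin n → Ω => Y (x k)) 2 ν := fun k =>
      hYmem.comp_measurePreserving (aux_map_eval P₀ k)
    have hXsum : X = ∑ k : Fin n, (fun x : Fin n → Ω => Y (x k)) := by
      funext x; simp [hX]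
    have hXmem : MemLp X 2 ν := by
      rw [hXsum]; exact memLp_finset_sum' _ (fun k _ => hmemk k)
    have hEk : ∀ k : Fin n, ∫ x, Y (x k) ∂ν = klD μ p₀ (q₁ n) := by
      intro k
      have h := (aux_map_eval (ι := Fin n) P₀ k).map_eq
      calc ∫ x, Y (x k) ∂ν = ∫ ω, Y ω ∂(Measure.map (Function.eval k) ν) :=
            (integral_map (measurable_pi_apply k).aemeasurable
              (by rw [h]; exact hYm.aestronglyMeasurable)).symm
        _ = klD μ p₀ (q₁ n) := by rw [h]; exact hEY
    have hE2k : ∀ k : Fin n, ∫ x, (Y (x k)) ^ 2 ∂ν = klV μ p₀ (q₁ n) := by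
      intro k
      have h := (aux_map_eval (ι := Fin n) P₀ k).map_eq
      calc ∫ x, (Y (x k)) ^ 2 ∂ν
          = ∫ ω, Y ω ^ 2 ∂(Measure.map (Function.eval k) ν) :=
            (integral_map (measurable_pi_apply k).aemeasurable
              (by rw [h]; exact (hYm.pow_const 2).aestronglyMeasurable)).symm
        _ = klV μ p₀ (q₁ n) := by rw [h]; exact hEY2
    have hEX : ∫ x, X x ∂ν = (n:ℝ) * klD μ p₀ (q₁ n) := by
      simp only [hX]
      rw [integral_finset_sum _ (fun k _ => ((hmemk k).integrable one_le_two))]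
      simp [hEk]
    have hVarX : ProbabilityTheory.variance X ν ≤ (n:ℝ) * klV μ p₀ (q₁ n) := by
      rw [hXsum, ProbabilityTheory.IndepFun.variance_sum (fun k _ => hmemk k)
        (fun i _ j _ hij => (aux_indep_eval P₀ hij).comp hYm hYm)]
      calc ∑ k : Fin n, ProbabilityTheory.variance (fun x : Fin n → Ω => Y (x k)) ν
          ≤ ∑ _k : Fin n, klV μ p₀ (q₁ n) := by
            refine Finset.sum_le_sum fun k _ => ?_
            have h := ProbabilityTheory.variance_le_expectation_sq (μ := ν)
              (X := fun x : Fin n → Ω => Y (x k))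
              (hYm.comp (measurable_pi_apply k)).aestronglyMeasurable
            refine h.trans (le_of_eq ?_)
            rw [← hE2k k]
            congr 1
        _ = (n:ℝ) * klV μ p₀ (q₁ n) := by simp [mul_comm]
    -- quantitative bounds
    have hv1sq : hellDist μ p₀ (q₁ n) ^ 2 ≤ ε n ^ 2 * hellSq μ p₀ (q₂ n) := by
      calc hellDist μ p₀ (q₁ n) ^ 2 ≤ (ε n * hellDist μ p₀ (q₂ n)) ^ 2 :=
            pow_le_pow_left₀ (Real.sqrt_nonneg _) (hiv n) 2
        _ = ε n ^ 2 * hellDist μ p₀ (q₂ n) ^ 2 := by ring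
        _ = ε n ^ 2 * hellSq μ p₀ (q₂ n) := by rw [hdist2 n]
    have hm_le : klD μ p₀ (q₁ n) ≤ M * ε n ^ 2 * hellSq μ p₀ (q₂ n) := by
      calc klD μ p₀ (q₁ n) ≤ M * hellDist μ p₀ (q₁ n) ^ 2 := hii n
        _ ≤ M * (ε n ^ 2 * hellSq μ p₀ (q₂ n)) := mul_le_mul_of_nonneg_left hv1sq hM.le
        _ = M * ε n ^ 2 * hellSq μ p₀ (q₂ n) := by ring
    have hs_le : klV μ p₀ (q₁ n) ≤ C * M * ε n ^ 2 * hellSq μ p₀ (q₂ n) := by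
      calc klV μ p₀ (q₁ n) ≤ C * klD μ p₀ (q₁ n) := hiii n
        _ ≤ C * (M * ε n ^ 2 * hellSq μ p₀ (q₂ n)) := mul_le_mul_of_nonneg_left hm_le hC.le
        _ = C * M * ε n ^ 2 * hellSq μ p₀ (q₂ n) := by ring
    have hklD4 : klD μ p₀ (q₁ n) ≤ hellSq μ p₀ (q₂ n) / 4 := by
      have h := mul_le_mul_of_nonneg_right hn2 (h2nn n)
      calc klD μ p₀ (q₁ n) ≤ M * ε n ^ 2 * hellSq μ p₀ (q₂ n) := hm_le
        _ ≤ 1/4 * hellSq μ p₀ (q₂ n) := by linarith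
        _ = hellSq μ p₀ (q₂ n) / 4 := by ring
    have hnm_le : (n:ℝ) * klD μ p₀ (q₁ n) ≤ t n / 4 := by
      have := mul_le_mul_of_nonneg_left hklD4 (Nat.cast_nonneg n : (0:ℝ) ≤ n)
      simp only [ht]
      linarith
    -- the two bad events
    set B₂ : Set (Fin n → Ω) := {x | Real.exp (-(t n / 4)) ≤ W x} with hB₂def
    have hB2 : ν B₂ ≤ ENNReal.ofReal (Real.exp (-(t n / 4))) := by
      have hm' := mul_meas_ge_le_integral_of_nonneg (μ := ν)
        (ae_of_all ν hW0) hWint (Real.exp (-(t n / 4)))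
      rw [hEW] at hm'
      have hρn : ρ ^ n ≤ Real.exp (-(t n / 2)) := by
        calc ρ ^ n ≤ (Real.exp (-(hellSq μ p₀ (q₂ n) / 2))) ^ n :=
              pow_le_pow_left₀ hρ0 hρle n
          _ = Real.exp (-(t n / 2)) := by
            rw [← Real.exp_nat_mul]
            congr 1
            simp only [ht]
            ring
      have hsplit : Real.exp (-(t n / 2))
          = Real.exp (-(t n / 4)) * Real.exp (-(t n / 4)) := by
        rw [← Real.exp_add]; ring_nf
      have h4 : (0:ℝ) < Real.exp (-(t n / 4)) := Real.exp_pos _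
      have hR : (ν B₂).toReal ≤ Real.exp (-(t n / 4)) := by
        refine le_of_mul_le_mul_left ?_ h4
        calc Real.exp (-(t n / 4)) * (ν B₂).toReal ≤ ρ ^ n := hm'
          _ ≤ Real.exp (-(t n / 4)) * Real.exp (-(t n / 4)) := hρn.trans_eq hsplit
      rw [← ENNReal.ofReal_toReal (measure_ne_top ν B₂)]
      exact ENNReal.ofReal_le_ofReal hR
    set B₁ : Set (Fin n → Ω) := {x | t n / 2 ≤ X x} with hB₁def
    have hB1 : ν B₁ ≤ ENNReal.ofReal (16*C*M*ε n ^ 2) := by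
      have hc : (0:ℝ) < t n / 4 := by linarith
      have hcheb := ProbabilityTheory.meas_ge_le_variance_div_sq (μ := ν) hXmem hc
      have hsub : B₁ ⊆ {x | t n / 4 ≤ |X x - ∫ y, X y ∂ν|} := by
        intro x hx
        simp only [hB₁def, Set.mem_setOf_eq] at hx ⊢
        have : t n / 4 ≤ X x - ∫ y, X y ∂ν := by
          rw [hEX]; linarith
        exact this.trans (le_abs_self _)
      refine (measure_mono hsub).trans (hcheb.trans (ENNReal.ofReal_le_ofReal ?_))
      have hden : (0:ℝ) < (t n / 4) ^ 2 := by positivity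
      have h1 : ProbabilityTheory.variance X ν / (t n / 4) ^ 2
          ≤ ((n:ℝ) * klV μ p₀ (q₁ n)) / (t n / 4) ^ 2 :=
        (div_le_div_iff_of_pos_right hden).2 hVarX
      refine h1.trans ?_
      rw [div_le_iff₀ hden]
      have h2 : (n:ℝ) * klV μ p₀ (q₁ n) ≤ C * M * ε n ^ 2 * t n := by
        calc (n:ℝ) * klV μ p₀ (q₁ n)
            ≤ (n:ℝ) * (C * M * ε n ^ 2 * hellSq μ p₀ (q₂ n)) :=
              mul_le_mul_of_nonneg_left hs_le (Nat.cast_nonneg n)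
          _ = C * M * ε n ^ 2 * ((n:ℝ) * hellSq μ p₀ (q₂ n)) := by ring
          _ = C * M * ε n ^ 2 * t n := by simp only [ht]
      have hcm : (0:ℝ) ≤ C * M * ε n ^ 2 := by positivity
      calc (n:ℝ) * klV μ p₀ (q₁ n) ≤ C * M * ε n ^ 2 * t n := h2
        _ ≤ C * M * ε n ^ 2 * (t n * t n) :=
            mul_le_mul_of_nonneg_left (le_mul_of_one_le_left htpos.le hn1) hcm
        _ = 16 * C * M * ε n ^ 2 * (t n / 4) ^ 2 := by ring
    -- the good event
    have hgoodn : ∀ᵐ x ∂ν, ∀ k, 0 < p₀ (x k) ∧ 0 < q₁ n (x k) := by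
      rw [hν]
      refine Filter.eventually_all.2 fun k => ?_
      exact ((MeasureTheory.Measure.tendsto_eval_ae_ae (μ := fun _ : Fin n => P₀)
        (i := k)).eventually (hpos n)).mono fun x hx => hx
    have hgood0 : ν {x | ¬ ∀ k, 0 < p₀ (x k) ∧ 0 < q₁ n (x k)} = 0 := ae_iff.mp hgoodn
    -- inclusion
    have hincl : (G n)ᶜ ⊆ {x | ¬ ∀ k, 0 < p₀ (x k) ∧ 0 < q₁ n (x k)} ∪ (B₁ ∪ B₂) := by
      intro x hx
      by_contra hcon
      simp only [Set.mem_union, Set.mem_setOf_eq, not_or, not_not] at hcon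
      obtain ⟨hgood, hb1, hb2⟩ := hcon
      apply hx
      show x ∈ G n
      simp only [hG, Set.mem_setOf_eq]
      have hp : ∀ k, 0 < p₀ (x k) := fun k => (hgood k).1
      have hq : ∀ k, 0 < q₁ n (x k) := fun k => (hgood k).2
      have e1 : ∏ k : Fin n, q₁ n (x k)
          = (∏ k : Fin n, p₀ (x k)) * Real.exp (-(X x)) := by
        have hpt1 : ∀ k : Fin n, q₁ n (x k) = p₀ (x k) * Real.exp (-(Y (x k))) := by
          intro k
          rw [Real.exp_neg, hY]
          rw [Real.exp_log (div_pos (hp k) (hq k))]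
          field_simp
          exact (mul_div_cancel_right₀ _ (hp k).ne').symm
        rw [Finset.prod_congr rfl (fun k _ => hpt1 k), Finset.prod_mul_distrib]
        congr 1
        rw [← Real.exp_sum]
        congr 1
        simp [hX]
      have e2 : ∏ k : Fin n, q₂ n (x k) = (∏ k : Fin n, p₀ (x k)) * (W x) ^ 2 := by
        have hpt2 : ∀ k : Fin n, q₂ n (x k) = p₀ (x k) * (g₂ (x k)) ^ 2 := by
          intro k
          rw [hg₂]
          rw [Real.sq_sqrt (div_nonneg (hq20 _) (hp k).le)]
          field_simp
          exact (mul_div_cancel_right₀ _ (hp k).ne').symm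
        rw [Finset.prod_congr rfl (fun k _ => hpt2 k), Finset.prod_mul_distrib,
          ← Finset.prod_pow]
      have hppos : 0 < ∏ k : Fin n, p₀ (x k) := Finset.prod_pos fun k _ => hp k
      rw [e1, e2]
      apply mul_lt_mul_of_pos_left _ hppos
      have h1 : W x < Real.exp (-(t n / 4)) := not_le.1 (by exact hb2)
      have h2 : X x < t n / 2 := not_le.1 (by exact hb1)
      calc (W x) ^ 2 < (Real.exp (-(t n / 4))) ^ 2 :=
            pow_lt_pow_left₀ h1 (hW0 x) two_ne_zero
        _ = Real.exp (-(t n / 2)) := by rw [← Real.exp_nat_mul]; congr 1; ring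
        _ ≤ Real.exp (-(X x)) := by
            rw [Real.exp_le_exp]; linarith
    calc ν (G n)ᶜ ≤ ν ({x | ¬ ∀ k, 0 < p₀ (x k) ∧ 0 < q₁ n (x k)} ∪ (B₁ ∪ B₂)) :=
          measure_mono hincl
      _ ≤ ν {x | ¬ ∀ k, 0 < p₀ (x k) ∧ 0 < q₁ n (x k)} + ν (B₁ ∪ B₂) := measure_union_le _ _
      _ ≤ 0 + (ν B₁ + ν B₂) := by rw [hgood0]; exact add_le_add le_rfl (measure_union_le _ _)
      _ ≤ ENNReal.ofReal (16*C*M*ε n ^ 2) + ENNReal.ofReal (Real.exp (-(t n / 4))) := by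
          rw [zero_add]; exact add_le_add hB1 hB2
  -- conclusion
  have hprob : ∀ n : ℕ, IsProbabilityMeasure (Measure.pi fun _ : Fin n => P₀) := fun n =>
    inferInstance
  have hGm : ∀ n, MeasurableSet (G n) := fun n =>
    measurableSet_lt
      (Finset.measurable_prod _ fun k _ => ((hq₂ n).1.comp (measurable_pi_apply k)))
      (Finset.measurable_prod _ fun k _ => ((hq₁ n).1.comp (measurable_pi_apply k)))
  have hMε : Tendsto (fun n => M * ε n ^ 2) atTop (nhds 0) := by
    have h' : Tendsto (fun n => M * (ε n * ε n)) atTop (nhds (M * (0 * 0))) :=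
      tendsto_const_nhds.mul (hε.mul hε)
    simpa [pow_two] using h'
  have hz0 : Tendsto (fun n => (Measure.pi fun _ : Fin n => P₀) (G n)ᶜ) atTop (nhds 0) := by
    have h1 : Tendsto (fun n => 16*C*M*ε n ^ 2) atTop (nhds 0) := by
      have h' : Tendsto (fun n => (16*C*M) * (ε n * ε n)) atTop (nhds ((16*C*M) * (0 * 0))) :=
        tendsto_const_nhds.mul (hε.mul hε)
      simpa [pow_two, mul_assoc] using h'
    have h2 : Tendsto (fun n => Real.exp (-(t n / 4))) atTop (nhds 0) := by
      have ht4 : Tendsto (fun n => -(t n / 4)) atTop atBot :=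
        tendsto_neg_atTop_atBot.comp (hv'.atTop_div_const (by norm_num))
      exact Real.tendsto_exp_atBot.comp ht4
    have hub : Tendsto (fun n => ENNReal.ofReal (16*C*M*ε n ^ 2) +
        ENNReal.ofReal (Real.exp (-(t n / 4)))) atTop (nhds 0) := by
      have := (ENNReal.tendsto_ofReal h1).add (ENNReal.tendsto_ofReal h2)
      simpa using this
    refine tendsto_of_tendsto_of_tendsto_of_le_of_le' tendsto_const_nhds hub
      (Eventually.of_forall fun n => zero_le) ?_
    filter_upwards [hv'.eventually_ge_atTop 1,
      (hMε.eventually_le_const (by norm_num : (0:ℝ) < 1/4))] with n h1 h2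
    exact key n h1 h2
  have heq : ∀ n : ℕ, (Measure.pi fun _ : Fin n => P₀) (G n) =
      1 - (Measure.pi fun _ : Fin n => P₀) (G n)ᶜ := by
    intro n
    haveI := hprob n
    conv_lhs => rw [← compl_compl (G n)]
    rw [prob_compl_eq_one_sub (hGm n).compl]
  have : Tendsto (fun n => 1 - (Measure.pi fun _ : Fin n => P₀) (G n)ᶜ) atTop (nhds 1) := by
    have := ENNReal.Tendsto.sub (tendsto_const_nhds (x := (1:ℝ≥0∞))) hz0 (Or.inl ENNReal.one_ne_top)
    simpa using this
  exact this.congr fun n => (heq n).symm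
end
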